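/- arXiv:2206.11830 — 6 statements merged into one kernel-verified Lean document; each statement's English description precedes it below -/
import Mathlib

section
/- Let U be an open subset of the set of ordered pairs (v, w) of orthonormal vectors in ℝ³, and let f : ℝ³ → ℝ be C³ on an open cone containing ℙ₁U ∪ ℙ₂U, positively homogeneous of degree 2 there (f(tx) = t²f(x) for t > 0). Suppose that for every (v, w) ∈ U and every θ ∈ ℝ with (v cos θ + w sin θ, −v sin θ + w cos θ) ∈ U, one has f(v cos θ + w sin θ) + f(−v sin θ + w cos θ) = f(v) + f(w). Then all third-order partial derivatives of f vanish at every point of ℙ₁U ∪ ℙ₂U: ∂³f(v)/∂v_i∂v_j∂v_k = 0 for all i, j, k ∈ {1,2,3}. -/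
open Matrix

/-- The set of ordered pairs of orthonormal vectors in `ℝ³`. -/
def OrthonormalPairsR3 : Set ((Fin 3 → ℝ) × (Fin 3 → ℝ)) :=
  {p | p.1 ⬝ᵥ p.1 = 1 ∧ p.2 ⬝ᵥ p.2 = 1 ∧ p.1 ⬝ᵥ p.2 = 0}

namespace Gleason3

open Real Filter

set_option maxHeartbeats 1000000

abbrev E3 : Type := Fin 3 → ℝ

noncomputable def fD1 (f : E3 → ℝ) : E3 → E3 →L[ℝ] ℝ := fderiv ℝ f
noncomputable def fD2 (f : E3 → ℝ) : E3 → E3 →L[ℝ] E3 →L[ℝ] ℝ := fderiv ℝ (fD1 f)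
noncomputable def fD3 (f : E3 → ℝ) : E3 → E3 →L[ℝ] E3 →L[ℝ] E3 →L[ℝ] ℝ :=
  fderiv ℝ (fD2 f)

variable {C : Set E3} {f : E3 → ℝ}

lemma hasD1 (hC : IsOpen C) (hf : ContDiffOn ℝ 3 f C) {x : E3} (hx : x ∈ C) :
    HasFDerivAt f (fD1 f x) x :=
  ((hf.differentiableOn (by norm_num)).differentiableAt (hC.mem_nhds hx)).hasFDerivAt

lemma contD1 (hC : IsOpen C) (hf : ContDiffOn ℝ 3 f C) : ContDiffOn ℝ 2 (fD1 f) C :=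
  hf.fderiv_of_isOpen hC (by norm_num)

lemma hasD2 (hC : IsOpen C) (hf : ContDiffOn ℝ 3 f C) {x : E3} (hx : x ∈ C) :
    HasFDerivAt (fD1 f) (fD2 f x) x :=
  (((contD1 hC hf).differentiableOn (by norm_num)).differentiableAt
    (hC.mem_nhds hx)).hasFDerivAt

lemma contD2 (hC : IsOpen C) (hf : ContDiffOn ℝ 3 f C) : ContDiffOn ℝ 1 (fD2 f) C :=
  (contD1 hC hf).fderiv_of_isOpen hC (by norm_num)

lemma hasD3 (hC : IsOpen C) (hf : ContDiffOn ℝ 3 f C) {x : E3} (hx : x ∈ C) :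
    HasFDerivAt (fD2 f) (fD3 f x) x :=
  (((contD2 hC hf).differentiableOn (by norm_num)).differentiableAt
    (hC.mem_nhds hx)).hasFDerivAt

lemma Ssym (hC : IsOpen C) (hf : ContDiffOn ℝ 3 f C) {x : E3} (hx : x ∈ C)
    (h k : E3) : fD2 f x h k = fD2 f x k h :=
  second_derivative_symmetric_of_eventually
    (by filter_upwards [hC.mem_nhds hx] with y hy using hasD1 hC hf hy)
    (hasD2 hC hf hx) h k

lemma Tsym12 (hC : IsOpen C) (hf : ContDiffOn ℝ 3 f C) {x : E3} (hx : x ∈ C)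
    (h k : E3) : fD3 f x h k = fD3 f x k h :=
  second_derivative_symmetric_of_eventually
    (by filter_upwards [hC.mem_nhds hx] with y hy using hasD2 hC hf hy)
    (hasD3 hC hf hx) h k

lemma Tsym23 (hC : IsOpen C) (hf : ContDiffOn ℝ 3 f C) {x : E3} (hx : x ∈ C)
    (h k l : E3) : fD3 f x h k l = fD3 f x h l k := by
  have hF := ((hasD3 hC hf hx).clm_apply (hasFDerivAt_const k x)).clm_apply
    (hasFDerivAt_const l x)
  have hG := ((hasD3 hC hf hx).clm_apply (hasFDerivAt_const l x)).clm_apply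
    (hasFDerivAt_const k x)
  have hev : (fun y => fD2 f y k l) =ᶠ[nhds x] fun y => fD2 f y l k := by
    filter_upwards [hC.mem_nhds hx] with y hy using Ssym hC hf hy k l
  have hu := hF.unique (hG.congr_of_eventuallyEq hev)
  have h2 := congrArg (fun L : E3 →L[ℝ] ℝ => L h) hu
  simpa using h2

lemma iter3_apply (f : E3 → ℝ) (x h k l : E3) :
    iteratedFDeriv ℝ 3 f x ![h, k, l] = fD3 f x h k l := by
  have e1 := iteratedFDeriv_succ_apply_right (𝕜 := ℝ) (n := 2) (f := f) (x := x)
    (![h, k, l] : Fin (2 + 1) → E3)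
  have e2 := iteratedFDeriv_two_apply (𝕜 := ℝ) (fun y => fderiv ℝ f y) x
    (Fin.init (![h, k, l] : Fin (2 + 1) → E3))
  rw [e2] at e1
  exact e1.trans (by rfl)

lemma comp_curve {F : Type*} [NormedAddCommGroup F] [NormedSpace ℝ F]
    {l : E3 → F} {l' : E3 →L[ℝ] F} {γ : ℝ → E3} {γ' : E3} {y : E3} {t₀ : ℝ}
    (hl : HasFDerivAt l l' y) (hγ : HasDerivAt γ γ' t₀) (hy : y = γ t₀) :
    HasDerivAt (fun s => l (γ s)) (l' γ') t₀ := by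
  rw [hy] at hl
  exact hl.comp_hasDerivAt t₀ hγ

lemma euler1 (hC : IsOpen C) (hf : ContDiffOn ℝ 3 f C)
    (hhom : ∀ x ∈ C, ∀ t : ℝ, 0 < t → f (t • x) = t ^ 2 * f x)
    {x : E3} (hx : x ∈ C) : fD1 f x x = 2 * f x := by
  have hc : HasDerivAt (fun t : ℝ => t • x) x 1 := by
    simpa using (hasDerivAt_id (1 : ℝ)).smul_const x
  have h1 : HasDerivAt (fun t : ℝ => f (t • x)) (fD1 f x x) 1 :=
    comp_curve (hasD1 hC hf hx) hc (by simp)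
  have h2 : HasDerivAt (fun t : ℝ => t ^ 2 * f x) (2 * f x) 1 := by
    have := (hasDerivAt_pow 2 (1 : ℝ)).mul_const (f x)
    norm_num at this
    exact this
  have hev : ∀ᶠ t in nhds (1 : ℝ), f (t • x) = t ^ 2 * f x := by
    filter_upwards [eventually_gt_nhds zero_lt_one] with t ht using hhom x hx t ht
  exact h1.unique (h2.congr_of_eventuallyEq hev)

lemma euler2 (hC : IsOpen C) (hf : ContDiffOn ℝ 3 f C)
    (hhom : ∀ x ∈ C, ∀ t : ℝ, 0 < t → f (t • x) = t ^ 2 * f x)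
    {x : E3} (hx : x ∈ C) (h : E3) : fD2 f x h x = fD1 f x h := by
  have hF := (hasD2 hC hf hx).clm_apply (hasFDerivAt_id x)
  have hG := (hasD1 hC hf hx).const_mul (2 : ℝ)
  have hev : (fun y => fD1 f y y) =ᶠ[nhds x] fun y => 2 * f y := by
    filter_upwards [hC.mem_nhds hx] with y hy using euler1 hC hf hhom hy
  have hu := hF.unique (hG.congr_of_eventuallyEq hev)
  have h2 := congrArg (fun L : E3 →L[ℝ] ℝ => L h) hu
  simp only [ContinuousLinearMap.add_apply, ContinuousLinearMap.coe_comp',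
    Function.comp_apply, ContinuousLinearMap.coe_id', id_eq,
    ContinuousLinearMap.flip_apply, ContinuousLinearMap.smul_apply, smul_eq_mul] at h2
  linarith

lemma euler3 (hC : IsOpen C) (hf : ContDiffOn ℝ 3 f C)
    (hhom : ∀ x ∈ C, ∀ t : ℝ, 0 < t → f (t • x) = t ^ 2 * f x)
    {x : E3} (hx : x ∈ C) (k h : E3) : fD3 f x k h x = 0 := by
  have hF := ((hasD3 hC hf hx).clm_apply (hasFDerivAt_const h x)).clm_apply
    (hasFDerivAt_id x)
  have hG := (hasD2 hC hf hx).clm_apply (hasFDerivAt_const h x)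
  have hev : (fun y => fD2 f y h y) =ᶠ[nhds x] fun y => fD1 f y h := by
    filter_upwards [hC.mem_nhds hx] with y hy using euler2 hC hf hhom hy h
  have hu := hF.unique (hG.congr_of_eventuallyEq hev)
  have h2 := congrArg (fun L : E3 →L[ℝ] ℝ => L k) hu
  simp only [ContinuousLinearMap.add_apply, ContinuousLinearMap.coe_comp',
    Function.comp_apply, ContinuousLinearMap.coe_id', id_eq,
    ContinuousLinearMap.flip_apply, ContinuousLinearMap.comp_zero,
    ContinuousLinearMap.zero_apply, zero_add, add_zero, map_zero] at h2
  have hs := Ssym hC hf hx h k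
  linarith

lemma dot_expand (α β γ δ : ℝ) (p q r s : E3) :
    (α • p + β • q) ⬝ᵥ (γ • r + δ • s)
      = α * γ * (p ⬝ᵥ r) + α * δ * (p ⬝ᵥ s) + β * γ * (q ⬝ᵥ r) + β * δ * (q ⬝ᵥ s) := by
  simp [dotProduct, Fin.sum_univ_three]; ring

lemma dot_expandL (α β : ℝ) (p q r : E3) :
    (α • p + β • q) ⬝ᵥ r = α * (p ⬝ᵥ r) + β * (q ⬝ᵥ r) := by
  simp [dotProduct, Fin.sum_univ_three]; ring

lemma dot_expandR (α β : ℝ) (p q r : E3) :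
    r ⬝ᵥ (α • p + β • q) = α * (r ⬝ᵥ p) + β * (r ⬝ᵥ q) := by
  simp [dotProduct, Fin.sum_univ_three]; ring

def cross3 (a b : E3) : E3 :=
  ![a 1 * b 2 - a 2 * b 1, a 2 * b 0 - a 0 * b 2, a 0 * b 1 - a 1 * b 0]

lemma cross3_dot_left (a b : E3) : a ⬝ᵥ cross3 a b = 0 := by
  simp [cross3, dotProduct, Fin.sum_univ_three]; ring

lemma cross3_dot_right (a b : E3) : b ⬝ᵥ cross3 a b = 0 := by
  simp [cross3, dotProduct, Fin.sum_univ_three]; ring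

lemma cross3_dot_self {a b : E3} (haa : a ⬝ᵥ a = 1) (hbb : b ⬝ᵥ b = 1)
    (hab : a ⬝ᵥ b = 0) : cross3 a b ⬝ᵥ cross3 a b = 1 := by
  have key : cross3 a b ⬝ᵥ cross3 a b = (a ⬝ᵥ a) * (b ⬝ᵥ b) - (a ⬝ᵥ b) ^ 2 := by
    simp [cross3, dotProduct, Fin.sum_univ_three]; ring
  rw [key, haa, hbb, hab]; norm_num

lemma basis_complete {x a u : E3} (hxx : x ⬝ᵥ x = 1) (haa : a ⬝ᵥ a = 1)
    (huu : u ⬝ᵥ u = 1) (hxa : x ⬝ᵥ a = 0) (hxu : x ⬝ᵥ u = 0) (hau : a ⬝ᵥ u = 0)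
    (h : E3) : (h ⬝ᵥ x) • x + (h ⬝ᵥ a) • a + (h ⬝ᵥ u) • u = h := by
  have hax : a ⬝ᵥ x = 0 := by rwa [dotProduct_comm]
  have hux : u ⬝ᵥ x = 0 := by rwa [dotProduct_comm]
  have hua : u ⬝ᵥ a = 0 := by rwa [dotProduct_comm]
  simp only [dotProduct, Fin.sum_univ_three] at hxx haa huu hxa hxu hau hax hux hua
  have hM : (Matrix.of ![x, a, u]) * (Matrix.of ![x, a, u])ᵀ = 1 := by
    ext i j
    fin_cases i <;> fin_cases j <;>
      simp [Matrix.mul_apply, Matrix.transpose_apply, Fin.sum_univ_three,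
        Matrix.one_apply, Matrix.vecHead, Matrix.vecTail, Function.comp] <;>
      first
        | linear_combination hxx
        | linear_combination haa
        | linear_combination huu
        | linear_combination hxa
        | linear_combination hxu
        | linear_combination hau
        | linear_combination hax
        | linear_combination hux
        | linear_combination hua
  have hM' := mul_eq_one_comm.mp hM
  have hstep : (h ⬝ᵥ x) • x + (h ⬝ᵥ a) • a + (h ⬝ᵥ u) • u
      = (Matrix.of ![x, a, u])ᵀ *ᵥ ((Matrix.of ![x, a, u]) *ᵥ h) := by
    funext i
    simp [Matrix.mulVec, Matrix.transpose_apply, dotProduct, Fin.sum_univ_three,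
      Pi.add_apply, Pi.smul_apply, smul_eq_mul]
    ring
  rw [hstep, Matrix.mulVec_mulVec, hM', Matrix.one_mulVec]

lemma trig4 {Q A B R ε : ℝ} (hε : 0 < ε)
    (h : ∀ φ : ℝ, |φ| < ε → Q * Real.cos φ ^ 3 + A * Real.cos φ ^ 2 * Real.sin φ
      + B * Real.cos φ * Real.sin φ ^ 2 + R * Real.sin φ ^ 3 = 0) :
    Q = 0 ∧ A = 0 ∧ B = 0 ∧ R = 0 := by
  have hQ : Q = 0 := by
    have h0 := h 0 (by simpa using hε)
    simpa using h0
  set φ₀ := min (ε / 2) 1 with hφ₀def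
  have hφ₀pos : 0 < φ₀ := lt_min (by linarith) one_pos
  have hφ₀ε : |φ₀| < ε := by
    rw [abs_of_pos hφ₀pos]
    exact lt_of_le_of_lt (min_le_left _ _) (by linarith)
  have hφ₀1 : φ₀ ≤ 1 := min_le_right _ _
  have hcos : 0 < Real.cos φ₀ :=
    Real.cos_pos_of_mem_Ioo ⟨by nlinarith [Real.pi_gt_three], by nlinarith [Real.pi_gt_three]⟩
  have hsin : 0 < Real.sin φ₀ :=
    Real.sin_pos_of_pos_of_lt_pi hφ₀pos (by nlinarith [Real.pi_gt_three])
  have hBz : B = 0 := by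
    have h1 := h φ₀ hφ₀ε
    have h2 := h (-φ₀) (by rwa [abs_neg])
    rw [Real.cos_neg, Real.sin_neg] at h2
    have hB2 : B * (Real.cos φ₀ * Real.sin φ₀ ^ 2) = 0 := by
      linear_combination (h1 + h2) / 2 - Real.cos φ₀ ^ 3 * hQ
    rcases mul_eq_zero.mp hB2 with h' | h'
    · exact h'
    · exact absurd h' (by positivity)
  have hAz : A = 0 := by
    set g : ℝ → ℝ := fun φ => A * Real.cos φ ^ 2 + R * Real.sin φ ^ 2 with hgdef
    have hg0 : ∀ φ ∈ Set.Ioo (0 : ℝ) (min ε π), g φ = 0 := by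
      intro φ hφ
      have hφε : |φ| < ε := by
        rw [abs_of_pos hφ.1]; exact lt_of_lt_of_le hφ.2 (min_le_left _ _)
      have hs : 0 < Real.sin φ :=
        Real.sin_pos_of_pos_of_lt_pi hφ.1 (lt_of_lt_of_le hφ.2 (min_le_right _ _))
      have h1 := h φ hφε
      have hsg : Real.sin φ * g φ = 0 := by
        simp only [hgdef]
        linear_combination h1 - Real.cos φ ^ 3 * hQ - Real.cos φ * Real.sin φ ^ 2 * hBz
      rcases mul_eq_zero.mp hsg with h' | h'
      · exact absurd h' hs.ne'
      · exact h'
    have hcont : Continuous g := by fun_prop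
    have ht1 : Filter.Tendsto g (nhdsWithin 0 (Set.Ioi 0)) (nhds (g 0)) :=
      (hcont.tendsto 0).mono_left nhdsWithin_le_nhds
    have ht2 : Filter.Tendsto g (nhdsWithin 0 (Set.Ioi 0)) (nhds 0) := by
      have heq : (fun _ : ℝ => (0 : ℝ)) =ᶠ[nhdsWithin 0 (Set.Ioi 0)] g := by
        filter_upwards [Ioo_mem_nhdsGT_of_mem
          (Set.mem_Ico.mpr ⟨le_refl (0 : ℝ), lt_min hε Real.pi_pos⟩)] with φ hφ
        exact (hg0 φ hφ).symm
      exact Filter.Tendsto.congr' heq tendsto_const_nhds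
    have hgz := tendsto_nhds_unique ht1 ht2
    simpa [hgdef] using hgz
  have hRz : R = 0 := by
    have h1 := h φ₀ hφ₀ε
    have hR2 : R * Real.sin φ₀ ^ 3 = 0 := by
      linear_combination h1 - Real.cos φ₀ ^ 3 * hQ - Real.cos φ₀ ^ 2 * Real.sin φ₀ * hAz
        - Real.cos φ₀ * Real.sin φ₀ ^ 2 * hBz
    rcases mul_eq_zero.mp hR2 with h' | h'
    · exact h'
    · exact absurd h' (by positivity)
  exact ⟨hQ, hAz, hBz, hRz⟩

lemma memP {U U₀ : Set (E3 × E3)} (hUeq : U = U₀ ∩ OrthonormalPairsR3)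
    {p : E3 × E3} (h : p ∈ U) : p ∈ OrthonormalPairsR3 := by
  rw [hUeq] at h; exact h.2

lemma memC1 {U : Set (E3 × E3)} (hCsub : (Prod.fst '' U ∪ Prod.snd '' U) ⊆ C)
    {a b : E3} (h : (a, b) ∈ U) : a ∈ C :=
  hCsub (Or.inl ⟨(a, b), h, rfl⟩)

lemma memC2 {U : Set (E3 × E3)} (hCsub : (Prod.fst '' U ∪ Prod.snd '' U) ⊆ C)
    {a b : E3} (h : (a, b) ∈ U) : b ∈ C :=
  hCsub (Or.inr ⟨(a, b), h, rfl⟩)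

lemma evU {U U₀ : Set (E3 × E3)} (hU₀ : IsOpen U₀) (hUeq : U = U₀ ∩ OrthonormalPairsR3)
    {γ : ℝ → E3 × E3} (hγ : Continuous γ) (h0 : γ 0 ∈ U)
    (hP : ∀ s, γ s ∈ OrthonormalPairsR3) : ∀ᶠ s in nhds (0 : ℝ), γ s ∈ U := by
  have h0' : γ 0 ∈ U₀ := by rw [hUeq] at h0; exact h0.1
  filter_upwards [hγ.continuousAt.eventually_mem (hU₀.mem_nhds h0')] with s hs
  rw [hUeq]; exact ⟨hs, hP s⟩

lemma rot_mem {v w : E3} (h : (v, w) ∈ OrthonormalPairsR3) (θ : ℝ) :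
    (Real.cos θ • v + Real.sin θ • w, (-Real.sin θ) • v + Real.cos θ • w)
      ∈ OrthonormalPairsR3 := by
  obtain ⟨h1, h2, h3⟩ := h
  have h3' : w ⬝ᵥ v = 0 := by rwa [dotProduct_comm]
  have hA : (Real.cos θ • v + Real.sin θ • w) ⬝ᵥ (Real.cos θ • v + Real.sin θ • w) = 1 := by
    rw [dot_expand, h1, h2, h3, h3']; linear_combination Real.sin_sq_add_cos_sq θ
  have hB : ((-Real.sin θ) • v + Real.cos θ • w) ⬝ᵥ ((-Real.sin θ) • v + Real.cos θ • w)
      = 1 := by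
    rw [dot_expand, h1, h2, h3, h3']; linear_combination Real.sin_sq_add_cos_sq θ
  have hC : (Real.cos θ • v + Real.sin θ • w) ⬝ᵥ ((-Real.sin θ) • v + Real.cos θ • w)
      = 0 := by
    rw [dot_expand, h1, h2, h3, h3']; ring
  exact ⟨hA, hB, hC⟩

lemma tiltA_mem {a b c : E3} (haa : a ⬝ᵥ a = 1) (hbb : b ⬝ᵥ b = 1) (hab : a ⬝ᵥ b = 0)
    (hac : a ⬝ᵥ c = 0) (hbc : b ⬝ᵥ c = 0) (hcc : c ⬝ᵥ c = 1) (s : ℝ) :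
    (Real.cos s • a + Real.sin s • c, b) ∈ OrthonormalPairsR3 := by
  have hca : c ⬝ᵥ a = 0 := by rwa [dotProduct_comm]
  have hcb : c ⬝ᵥ b = 0 := by rwa [dotProduct_comm]
  have hA : (Real.cos s • a + Real.sin s • c) ⬝ᵥ (Real.cos s • a + Real.sin s • c) = 1 := by
    rw [dot_expand, haa, hcc, hac, hca]; linear_combination Real.sin_sq_add_cos_sq s
  have hC : (Real.cos s • a + Real.sin s • c) ⬝ᵥ b = 0 := by
    rw [dot_expandL, hab, hcb]; ring
  exact ⟨hA, hbb, hC⟩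

lemma tiltB_mem {a b c : E3} (haa : a ⬝ᵥ a = 1) (hbb : b ⬝ᵥ b = 1) (hab : a ⬝ᵥ b = 0)
    (hac : a ⬝ᵥ c = 0) (hbc : b ⬝ᵥ c = 0) (hcc : c ⬝ᵥ c = 1) (s : ℝ) :
    (a, Real.cos s • b + Real.sin s • c) ∈ OrthonormalPairsR3 := by
  have hcb : c ⬝ᵥ b = 0 := by rwa [dotProduct_comm]
  have hB : (Real.cos s • b + Real.sin s • c) ⬝ᵥ (Real.cos s • b + Real.sin s • c) = 1 := by
    rw [dot_expand, hbb, hcc, hbc, hcb]; linear_combination Real.sin_sq_add_cos_sq s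
  have hC : a ⬝ᵥ (Real.cos s • b + Real.sin s • c) = 0 := by
    rw [dot_expandR, hab, hac]; ring
  exact ⟨haa, hB, hC⟩

lemma hasDerivAt_curveA (a c : E3) :
    HasDerivAt (fun s : ℝ => Real.cos s • a + Real.sin s • c) c 0 := by
  have h := ((Real.hasDerivAt_cos 0).smul_const a).add ((Real.hasDerivAt_sin 0).smul_const c)
  refine h.congr_deriv ?_; simp

lemma hasDerivAt_curveB (a b : E3) :
    HasDerivAt (fun s : ℝ => (-Real.sin s) • a + Real.cos s • b) (-a) 0 := by
  have h := (((Real.hasDerivAt_sin 0).neg).smul_const a).add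
    ((Real.hasDerivAt_cos 0).smul_const b)
  refine h.congr_deriv ?_; simp

section Relations

variable {U U₀ : Set (E3 × E3)}

lemma R1 (hC : IsOpen C) (hf : ContDiffOn ℝ 3 f C)
    (hU₀ : IsOpen U₀) (hUeq : U = U₀ ∩ OrthonormalPairsR3)
    (hCsub : (Prod.fst '' U ∪ Prod.snd '' U) ⊆ C)
    (hrot : ∀ v w : E3, (v, w) ∈ U → ∀ θ : ℝ,
      (Real.cos θ • v + Real.sin θ • w, -(Real.sin θ) • v + Real.cos θ • w) ∈ U →
      f (Real.cos θ • v + Real.sin θ • w) + f (-(Real.sin θ) • v + Real.cos θ • w)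
        = f v + f w) :
    ∀ a b : E3, (a, b) ∈ U → fD1 f a b = fD1 f b a := by
  intro a b hab
  have haC : a ∈ C := memC1 hCsub hab
  have hbC : b ∈ C := memC2 hCsub hab
  have hev : ∀ᶠ θ in nhds (0 : ℝ),
      (Real.cos θ • a + Real.sin θ • b, (-Real.sin θ) • a + Real.cos θ • b) ∈ U := by
    refine evU hU₀ hUeq ?_ ?_ (fun s => rot_mem (memP hUeq hab) s)
    · fun_prop
    · simpa using hab
  have hgz : (fun θ : ℝ => f (Real.cos θ • a + Real.sin θ • b)
      + f ((-Real.sin θ) • a + Real.cos θ • b)) =ᶠ[nhds 0] fun _ => f a + f b := by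
    filter_upwards [hev] with θ hθ using hrot a b hab θ hθ
  have hd : HasDerivAt (fun θ : ℝ => f (Real.cos θ • a + Real.sin θ • b)
      + f ((-Real.sin θ) • a + Real.cos θ • b)) (fD1 f a b + fD1 f b (-a)) 0 := by
    have h1 : HasDerivAt (fun θ : ℝ => f (Real.cos θ • a + Real.sin θ • b)) (fD1 f a b) 0 :=
      comp_curve (hasD1 hC hf haC) (hasDerivAt_curveA a b) (by simp)
    have h2 : HasDerivAt (fun θ : ℝ => f ((-Real.sin θ) • a + Real.cos θ • b))
        (fD1 f b (-a)) 0 :=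
      comp_curve (hasD1 hC hf hbC) (hasDerivAt_curveB a b) (by simp)
    exact h1.add h2
  have hz := hd.unique ((hasDerivAt_const (0 : ℝ) (f a + f b)).congr_of_eventuallyEq hgz)
  rw [map_neg] at hz
  linarith

lemma A1 (hC : IsOpen C) (hf : ContDiffOn ℝ 3 f C)
    (hU₀ : IsOpen U₀) (hUeq : U = U₀ ∩ OrthonormalPairsR3)
    (hCsub : (Prod.fst '' U ∪ Prod.snd '' U) ⊆ C)
    (hrot : ∀ v w : E3, (v, w) ∈ U → ∀ θ : ℝ,
      (Real.cos θ • v + Real.sin θ • w, -(Real.sin θ) • v + Real.cos θ • w) ∈ U →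
      f (Real.cos θ • v + Real.sin θ • w) + f (-(Real.sin θ) • v + Real.cos θ • w)
        = f v + f w) :
    ∀ a b c : E3, (a, b) ∈ U → a ⬝ᵥ c = 0 → b ⬝ᵥ c = 0 → c ⬝ᵥ c = 1 →
      fD2 f a c b = fD1 f b c := by
  intro a b c hab hac hbc hcc
  have haC : a ∈ C := memC1 hCsub hab
  have hbC : b ∈ C := memC2 hCsub hab
  obtain ⟨haa, hbb, hab0⟩ := memP hUeq hab
  have hev : ∀ᶠ s in nhds (0 : ℝ), (Real.cos s • a + Real.sin s • c, b) ∈ U := by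
    refine evU hU₀ hUeq ?_ ?_ (fun s => tiltA_mem haa hbb hab0 hac hbc hcc s)
    · fun_prop
    · simpa using hab
  have hgz : (fun s : ℝ => fD1 f (Real.cos s • a + Real.sin s • c) b
      - fD1 f b (Real.cos s • a + Real.sin s • c)) =ᶠ[nhds 0] fun _ => 0 := by
    filter_upwards [hev] with s hs
    rw [R1 hC hf hU₀ hUeq hCsub hrot _ _ hs, sub_self]
  have hd : HasDerivAt (fun s : ℝ => fD1 f (Real.cos s • a + Real.sin s • c) b
      - fD1 f b (Real.cos s • a + Real.sin s • c)) (fD2 f a c b - fD1 f b c) 0 := by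
    have hc1 : HasDerivAt (fun s : ℝ => fD1 f (Real.cos s • a + Real.sin s • c))
        (fD2 f a c) 0 :=
      comp_curve (hasD2 hC hf haC) (hasDerivAt_curveA a c) (by simp)
    have h1 : HasDerivAt (fun s : ℝ => fD1 f (Real.cos s • a + Real.sin s • c) b)
        (fD2 f a c b) 0 := by
      have := hc1.clm_apply (hasDerivAt_const (0 : ℝ) b)
      simpa using this
    have h2 : HasDerivAt (fun s : ℝ => fD1 f b (Real.cos s • a + Real.sin s • c))
        (fD1 f b c) 0 :=
      comp_curve (fD1 f b).hasFDerivAt (hasDerivAt_curveA a c) rfl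
    exact h1.sub h2
  have hz := hd.unique ((hasDerivAt_const (0 : ℝ) 0).congr_of_eventuallyEq hgz)
  linarith

lemma A2 (hC : IsOpen C) (hf : ContDiffOn ℝ 3 f C)
    (hU₀ : IsOpen U₀) (hUeq : U = U₀ ∩ OrthonormalPairsR3)
    (hCsub : (Prod.fst '' U ∪ Prod.snd '' U) ⊆ C)
    (hrot : ∀ v w : E3, (v, w) ∈ U → ∀ θ : ℝ,
      (Real.cos θ • v + Real.sin θ • w, -(Real.sin θ) • v + Real.cos θ • w) ∈ U →
      f (Real.cos θ • v + Real.sin θ • w) + f (-(Real.sin θ) • v + Real.cos θ • w)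
        = f v + f w) :
    ∀ a b c : E3, (a, b) ∈ U → a ⬝ᵥ c = 0 → b ⬝ᵥ c = 0 → c ⬝ᵥ c = 1 →
      fD1 f a c = fD2 f b c a := by
  intro a b c hab hac hbc hcc
  have haC : a ∈ C := memC1 hCsub hab
  have hbC : b ∈ C := memC2 hCsub hab
  obtain ⟨haa, hbb, hab0⟩ := memP hUeq hab
  have hev : ∀ᶠ s in nhds (0 : ℝ), (a, Real.cos s • b + Real.sin s • c) ∈ U := by
    refine evU hU₀ hUeq ?_ ?_ (fun s => tiltB_mem haa hbb hab0 hac hbc hcc s)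
    · fun_prop
    · simpa using hab
  have hgz : (fun s : ℝ => fD1 f a (Real.cos s • b + Real.sin s • c)
      - fD1 f (Real.cos s • b + Real.sin s • c) a) =ᶠ[nhds 0] fun _ => 0 := by
    filter_upwards [hev] with s hs
    rw [R1 hC hf hU₀ hUeq hCsub hrot _ _ hs, sub_self]
  have hd : HasDerivAt (fun s : ℝ => fD1 f a (Real.cos s • b + Real.sin s • c)
      - fD1 f (Real.cos s • b + Real.sin s • c) a) (fD1 f a c - fD2 f b c a) 0 := by
    have h1 : HasDerivAt (fun s : ℝ => fD1 f a (Real.cos s • b + Real.sin s • c))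
        (fD1 f a c) 0 :=
      comp_curve (fD1 f a).hasFDerivAt (hasDerivAt_curveA b c) rfl
    have hc1 : HasDerivAt (fun s : ℝ => fD1 f (Real.cos s • b + Real.sin s • c))
        (fD2 f b c) 0 :=
      comp_curve (hasD2 hC hf hbC) (hasDerivAt_curveA b c) (by simp)
    have h2 : HasDerivAt (fun s : ℝ => fD1 f (Real.cos s • b + Real.sin s • c) a)
        (fD2 f b c a) 0 := by
      have := hc1.clm_apply (hasDerivAt_const (0 : ℝ) a)
      simpa using this
    exact h1.sub h2
  have hz := hd.unique ((hasDerivAt_const (0 : ℝ) 0).congr_of_eventuallyEq hgz)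
  linarith

lemma R2 (hC : IsOpen C) (hf : ContDiffOn ℝ 3 f C)
    (hhom : ∀ x ∈ C, ∀ t : ℝ, 0 < t → f (t • x) = t ^ 2 * f x)
    (hU₀ : IsOpen U₀) (hUeq : U = U₀ ∩ OrthonormalPairsR3)
    (hCsub : (Prod.fst '' U ∪ Prod.snd '' U) ⊆ C)
    (hrot : ∀ v w : E3, (v, w) ∈ U → ∀ θ : ℝ,
      (Real.cos θ • v + Real.sin θ • w, -(Real.sin θ) • v + Real.cos θ • w) ∈ U →
      f (Real.cos θ • v + Real.sin θ • w) + f (-(Real.sin θ) • v + Real.cos θ • w)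
        = f v + f w) :
    ∀ a b : E3, (a, b) ∈ U →
      fD2 f a b b + fD2 f b a a = 2 * f a + 2 * f b := by
  intro a b hab
  have haC : a ∈ C := memC1 hCsub hab
  have hbC : b ∈ C := memC2 hCsub hab
  have hev : ∀ᶠ θ in nhds (0 : ℝ),
      (Real.cos θ • a + Real.sin θ • b, (-Real.sin θ) • a + Real.cos θ • b) ∈ U := by
    refine evU hU₀ hUeq ?_ ?_ (fun s => rot_mem (memP hUeq hab) s)
    · fun_prop
    · simpa using hab
  have hgz : (fun θ : ℝ =>
      fD1 f (Real.cos θ • a + Real.sin θ • b) ((-Real.sin θ) • a + Real.cos θ • b)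
      - fD1 f ((-Real.sin θ) • a + Real.cos θ • b) (Real.cos θ • a + Real.sin θ • b))
      =ᶠ[nhds 0] fun _ => 0 := by
    filter_upwards [hev] with θ hθ
    rw [R1 hC hf hU₀ hUeq hCsub hrot _ _ hθ, sub_self]
  have hc1 : HasDerivAt (fun θ : ℝ => fD1 f (Real.cos θ • a + Real.sin θ • b))
      (fD2 f a b) 0 :=
    comp_curve (hasD2 hC hf haC) (hasDerivAt_curveA a b) (by simp)
  have hc2 : HasDerivAt (fun θ : ℝ => fD1 f ((-Real.sin θ) • a + Real.cos θ • b))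
      (fD2 f b (-a)) 0 :=
    comp_curve (hasD2 hC hf hbC) (hasDerivAt_curveB a b) (by simp)
  have h1 := hc1.clm_apply (hasDerivAt_curveB a b)
  have h2 := hc2.clm_apply (hasDerivAt_curveA a b)
  have hd := h1.sub h2
  have hz := hd.unique ((hasDerivAt_const (0 : ℝ) 0).congr_of_eventuallyEq hgz)
  simp only [Real.cos_zero, Real.sin_zero, neg_zero, zero_smul, one_smul, zero_add,
    add_zero, map_neg, ContinuousLinearMap.neg_apply] at hz
  have e1 := euler1 hC hf hhom haC
  have e2 := euler1 hC hf hhom hbC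
  linarith

lemma KEY1 (hC : IsOpen C) (hf : ContDiffOn ℝ 3 f C)
    (hhom : ∀ x ∈ C, ∀ t : ℝ, 0 < t → f (t • x) = t ^ 2 * f x)
    (hU₀ : IsOpen U₀) (hUeq : U = U₀ ∩ OrthonormalPairsR3)
    (hCsub : (Prod.fst '' U ∪ Prod.snd '' U) ⊆ C)
    (hrot : ∀ v w : E3, (v, w) ∈ U → ∀ θ : ℝ,
      (Real.cos θ • v + Real.sin θ • w, -(Real.sin θ) • v + Real.cos θ • w) ∈ U →
      f (Real.cos θ • v + Real.sin θ • w) + f (-(Real.sin θ) • v + Real.cos θ • w)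
        = f v + f w) :
    ∀ a b c : E3, (a, b) ∈ U → a ⬝ᵥ c = 0 → b ⬝ᵥ c = 0 → c ⬝ᵥ c = 1 →
      fD3 f a c b b = 0 := by
  intro a b c hab hac hbc hcc
  have haC : a ∈ C := memC1 hCsub hab
  have hbC : b ∈ C := memC2 hCsub hab
  obtain ⟨haa, hbb, hab0⟩ := memP hUeq hab
  have hev : ∀ᶠ s in nhds (0 : ℝ), (Real.cos s • a + Real.sin s • c, b) ∈ U := by
    refine evU hU₀ hUeq ?_ ?_ (fun s => tiltA_mem haa hbb hab0 hac hbc hcc s)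
    · fun_prop
    · simpa using hab
  have hgz : (fun s : ℝ => fD2 f (Real.cos s • a + Real.sin s • c) b b
      + fD2 f b (Real.cos s • a + Real.sin s • c) (Real.cos s • a + Real.sin s • c)
      - (2 * f (Real.cos s • a + Real.sin s • c) + 2 * f b)) =ᶠ[nhds 0] fun _ => 0 := by
    filter_upwards [hev] with s hs
    rw [R2 hC hf hhom hU₀ hUeq hCsub hrot _ _ hs, sub_self]
  have hstep : HasDerivAt (fun s : ℝ => fD2 f (Real.cos s • a + Real.sin s • c))
      (fD3 f a c) 0 :=
    comp_curve (F := E3 →L[ℝ] E3 →L[ℝ] ℝ) (hasD3 hC hf haC) (hasDerivAt_curveA a c) (by simp)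
  have d1a := hstep.clm_apply (hasDerivAt_const (0 : ℝ) b)
  have d1 := d1a.clm_apply (hasDerivAt_const (0 : ℝ) b)
  have hc2 : HasDerivAt (fun s : ℝ => fD2 f b (Real.cos s • a + Real.sin s • c))
      (fD2 f b c) 0 :=
    comp_curve (fD2 f b).hasFDerivAt (hasDerivAt_curveA a c) rfl
  have d2 := hc2.clm_apply (hasDerivAt_curveA a c)
  have hfc : HasDerivAt (fun s : ℝ => f (Real.cos s • a + Real.sin s • c)) (fD1 f a c) 0 :=
    comp_curve (hasD1 hC hf haC) (hasDerivAt_curveA a c) (by simp)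
  have d3 := (hfc.const_mul (2 : ℝ)).add_const (2 * f b)
  have hd := (d1.add d2).sub d3
  have hz := hd.unique ((hasDerivAt_const (0 : ℝ) 0).congr_of_eventuallyEq hgz)
  simp only [Real.cos_zero, Real.sin_zero, zero_smul, one_smul, add_zero, zero_add,
    map_zero, ContinuousLinearMap.zero_apply] at hz
  have eA2 := A2 hC hf hU₀ hUeq hCsub hrot a b c hab hac hbc hcc
  have eS := Ssym hC hf hbC a c
  linarith

lemma KEY2 (hC : IsOpen C) (hf : ContDiffOn ℝ 3 f C)
    (hhom : ∀ x ∈ C, ∀ t : ℝ, 0 < t → f (t • x) = t ^ 2 * f x)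
    (hU₀ : IsOpen U₀) (hUeq : U = U₀ ∩ OrthonormalPairsR3)
    (hCsub : (Prod.fst '' U ∪ Prod.snd '' U) ⊆ C)
    (hrot : ∀ v w : E3, (v, w) ∈ U → ∀ θ : ℝ,
      (Real.cos θ • v + Real.sin θ • w, -(Real.sin θ) • v + Real.cos θ • w) ∈ U →
      f (Real.cos θ • v + Real.sin θ • w) + f (-(Real.sin θ) • v + Real.cos θ • w)
        = f v + f w) :
    ∀ a b c : E3, (a, b) ∈ U → a ⬝ᵥ c = 0 → b ⬝ᵥ c = 0 → c ⬝ᵥ c = 1 →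
      fD3 f b c a a = 0 := by
  intro a b c hab hac hbc hcc
  have haC : a ∈ C := memC1 hCsub hab
  have hbC : b ∈ C := memC2 hCsub hab
  obtain ⟨haa, hbb, hab0⟩ := memP hUeq hab
  have hev : ∀ᶠ s in nhds (0 : ℝ), (a, Real.cos s • b + Real.sin s • c) ∈ U := by
    refine evU hU₀ hUeq ?_ ?_ (fun s => tiltB_mem haa hbb hab0 hac hbc hcc s)
    · fun_prop
    · simpa using hab
  have hgz : (fun s : ℝ => fD2 f a (Real.cos s • b + Real.sin s • c)
      (Real.cos s • b + Real.sin s • c)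
      + fD2 f (Real.cos s • b + Real.sin s • c) a a
      - (2 * f a + 2 * f (Real.cos s • b + Real.sin s • c))) =ᶠ[nhds 0] fun _ => 0 := by
    filter_upwards [hev] with s hs
    rw [R2 hC hf hhom hU₀ hUeq hCsub hrot _ _ hs, sub_self]
  have hc1 : HasDerivAt (fun s : ℝ => fD2 f a (Real.cos s • b + Real.sin s • c))
      (fD2 f a c) 0 :=
    comp_curve (fD2 f a).hasFDerivAt (hasDerivAt_curveA b c) rfl
  have d1 := hc1.clm_apply (hasDerivAt_curveA b c)
  have hstep : HasDerivAt (fun s : ℝ => fD2 f (Real.cos s • b + Real.sin s • c))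
      (fD3 f b c) 0 :=
    comp_curve (F := E3 →L[ℝ] E3 →L[ℝ] ℝ) (hasD3 hC hf hbC) (hasDerivAt_curveA b c) (by simp)
  have d2a := hstep.clm_apply (hasDerivAt_const (0 : ℝ) a)
  have d2 := d2a.clm_apply (hasDerivAt_const (0 : ℝ) a)
  have hfc : HasDerivAt (fun s : ℝ => f (Real.cos s • b + Real.sin s • c)) (fD1 f b c) 0 :=
    comp_curve (hasD1 hC hf hbC) (hasDerivAt_curveA b c) (by simp)
  have d3 := (hfc.const_mul (2 : ℝ)).const_add (2 * f a)
  have hd := (d1.add d2).sub d3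
  have hz := hd.unique ((hasDerivAt_const (0 : ℝ) 0).congr_of_eventuallyEq hgz)
  simp only [Real.cos_zero, Real.sin_zero, zero_smul, one_smul, add_zero, zero_add,
    map_zero, ContinuousLinearMap.zero_apply] at hz
  have eA1 := A1 hC hf hU₀ hUeq hCsub hrot a b c hab hac hbc hcc
  have eS := Ssym hC hf haC b c
  linarith

end Relations

lemma master (hC : IsOpen C) (hf : ContDiffOn ℝ 3 f C)
    (hhom : ∀ x ∈ C, ∀ t : ℝ, 0 < t → f (t • x) = t ^ 2 * f x)
    {x a u : E3} (hxC : x ∈ C)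
    (hxx : x ⬝ᵥ x = 1) (haa : a ⬝ᵥ a = 1) (huu : u ⬝ᵥ u = 1)
    (hxa : x ⬝ᵥ a = 0) (hxu : x ⬝ᵥ u = 0) (hau : a ⬝ᵥ u = 0)
    {ε : ℝ} (hε : 0 < ε)
    (hK : ∀ φ : ℝ, |φ| < ε → fD3 f x (Real.cos φ • u + (-Real.sin φ) • a)
      (Real.cos φ • a + Real.sin φ • u) (Real.cos φ • a + Real.sin φ • u) = 0)
    (h k l : E3) : fD3 f x h k l = 0 := by
  have t12 : ∀ h k l : E3, fD3 f x h k l = fD3 f x k h l := fun h k l => by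
    rw [Tsym12 hC hf hxC h k]
  have t23 : ∀ h k l : E3, fD3 f x h k l = fD3 f x h l k := fun h k l =>
    Tsym23 hC hf hxC h k l
  have e1 : fD3 f x u a a = fD3 f x a a u := by rw [t12 u a a, t23 a u a]
  have e2 : fD3 f x u a u = fD3 f x a u u := t12 u a u
  have e3 : fD3 f x u u a = fD3 f x a u u := by rw [t23 u u a]; exact t12 u a u
  have e4 : fD3 f x a u a = fD3 f x a a u := t23 a u a
  have hEq : ∀ φ : ℝ, |φ| < ε →
      (fD3 f x a a u) * Real.cos φ ^ 3
      + (2 * fD3 f x a u u - fD3 f x a a a) * Real.cos φ ^ 2 * Real.sin φ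
      + (fD3 f x u u u - 2 * fD3 f x a a u) * Real.cos φ * Real.sin φ ^ 2
      + (-(fD3 f x a u u)) * Real.sin φ ^ 3 = 0 := by
    intro φ hφ
    have h0 := hK φ hφ
    simp only [_root_.map_add, _root_.map_smul, ContinuousLinearMap.add_apply,
      ContinuousLinearMap.smul_apply, smul_eq_mul] at h0
    linear_combination h0 - Real.cos φ ^ 3 * e1 - Real.cos φ ^ 2 * Real.sin φ * e2
      - Real.cos φ ^ 2 * Real.sin φ * e3 + Real.cos φ * Real.sin φ ^ 2 * e4
  obtain ⟨hq, hA, hB, hR⟩ := trig4 hε hEq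
  have hr : fD3 f x a u u = 0 := by linarith
  have hp : fD3 f x a a a = 0 := by linarith
  have hs0 : fD3 f x u u u = 0 := by linarith
  have z1 : ∀ k l : E3, fD3 f x k l x = 0 := fun k l => euler3 hC hf hhom hxC k l
  have z2 : ∀ k l : E3, fD3 f x k x l = 0 := fun k l => by
    rw [t23 k x l]; exact z1 k l
  have z3 : ∀ k l : E3, fD3 f x x k l = 0 := fun k l => by
    rw [t12 x k l]; exact z2 k l
  have zaua : fD3 f x a u a = 0 := by rw [e4]; exact hq
  have zuaa : fD3 f x u a a = 0 := by rw [e1]; exact hq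
  have zuau : fD3 f x u a u = 0 := by rw [e2]; exact hr
  have zuua : fD3 f x u u a = 0 := by rw [e3]; exact hr
  have hbh := basis_complete hxx haa huu hxa hxu hau h
  have hbk := basis_complete hxx haa huu hxa hxu hau k
  have hbl := basis_complete hxx haa huu hxa hxu hau l
  rw [← hbh, ← hbk, ← hbl]
  simp only [_root_.map_add, _root_.map_smul, ContinuousLinearMap.add_apply,
    ContinuousLinearMap.smul_apply, smul_eq_mul, z1, z2, z3, hq, hr, hp, hs0,
    zaua, zuaa, zuau, zuua, mul_zero, add_zero, zero_add]

end Gleason3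

open Gleason3 in
/-- Let `U` be an open subset of the set of ordered pairs of orthonormal vectors of `ℝ³`,
and let `f` be `C³` and positively homogeneous of degree `2` on an open cone containing
`ℙ₁U ∪ ℙ₂U`. If `f(v) + f(w)` is invariant under rotations of the orthonormal pair `(v, w)`
within `U`, then all third-order partial derivatives of `f` vanish on `ℙ₁U ∪ ℙ₂U`. -/
theorem third_derivatives_vanish (U : Set ((Fin 3 → ℝ) × (Fin 3 → ℝ)))
    (hUopen : ∃ U₀ : Set ((Fin 3 → ℝ) × (Fin 3 → ℝ)),
      IsOpen U₀ ∧ U = U₀ ∩ OrthonormalPairsR3)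
    (C : Set (Fin 3 → ℝ)) (hCopen : IsOpen C)
    (hCcone : ∀ x ∈ C, ∀ t : ℝ, 0 < t → t • x ∈ C)
    (hCsub : (Prod.fst '' U ∪ Prod.snd '' U) ⊆ C)
    (f : (Fin 3 → ℝ) → ℝ) (hf : ContDiffOn ℝ 3 f C)
    (hhom : ∀ x ∈ C, ∀ t : ℝ, 0 < t → f (t • x) = t ^ 2 * f x)
    (hrot : ∀ v w : Fin 3 → ℝ, (v, w) ∈ U → ∀ θ : ℝ,
      (Real.cos θ • v + Real.sin θ • w, -(Real.sin θ) • v + Real.cos θ • w) ∈ U →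
      f (Real.cos θ • v + Real.sin θ • w) + f (-(Real.sin θ) • v + Real.cos θ • w)
        = f v + f w) :
    ∀ x ∈ Prod.fst '' U ∪ Prod.snd '' U, ∀ i j k : Fin 3,
      iteratedFDeriv ℝ 3 f x ![Pi.single i 1, Pi.single j 1, Pi.single k 1] = 0 := by
  obtain ⟨U₀, hU₀, hUeq⟩ := hUopen
  intro x hx i j k
  rw [Gleason3.iter3_apply]
  rcases hx with ⟨⟨v, w⟩, hvw, rfl⟩ | ⟨⟨v, w⟩, hvw, rfl⟩
  · obtain ⟨hvv, hww, hvw0⟩ := memP hUeq hvw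
    have hvv' : v ⬝ᵥ v = 1 := hvv
    have hww' : w ⬝ᵥ w = 1 := hww
    have hvw0' : v ⬝ᵥ w = 0 := hvw0
    obtain ⟨u, hvu, hwu, huu⟩ : ∃ u : Gleason3.E3, v ⬝ᵥ u = 0 ∧ w ⬝ᵥ u = 0 ∧ u ⬝ᵥ u = 1 :=
      ⟨cross3 v w, cross3_dot_left v w, cross3_dot_right v w,
        cross3_dot_self hvv' hww' hvw0'⟩
    have huw : u ⬝ᵥ w = 0 := by rwa [dotProduct_comm]
    have hev : ∀ᶠ φ in nhds (0 : ℝ), (v, Real.cos φ • w + Real.sin φ • u) ∈ U := by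
      refine evU hU₀ hUeq (γ := fun φ => (v, Real.cos φ • w + Real.sin φ • u)) ?_ ?_
        (fun s => tiltB_mem hvv' hww' hvw0' hvu hwu huu s)
      · fun_prop
      · simpa using hvw
    have hK0 : ∀ᶠ φ in nhds (0 : ℝ), fD3 f v (Real.cos φ • u + (-Real.sin φ) • w)
        (Real.cos φ • w + Real.sin φ • u) (Real.cos φ • w + Real.sin φ • u) = 0 := by
      filter_upwards [hev] with φ hφ
      refine KEY1 hCopen hf hhom hU₀ hUeq hCsub hrot v _ _ hφ ?_ ?_ ?_
      · rw [dot_expandR, hvu, hvw0']; ring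
      · rw [dot_expand, hwu, hww', huu, huw]; ring
      · rw [dot_expand, huu, huw, hwu, hww']; linear_combination Real.sin_sq_add_cos_sq φ
    rw [Metric.eventually_nhds_iff] at hK0
    obtain ⟨ε, hε, hK⟩ := hK0
    exact master hCopen hf hhom (memC1 hCsub hvw) hvv' hww' huu hvw0' hvu hwu hε
      (fun φ hφ => hK (by simpa [Real.dist_eq] using hφ)) _ _ _
  · obtain ⟨hvv, hww, hvw0⟩ := memP hUeq hvw
    have hvv' : v ⬝ᵥ v = 1 := hvv
    have hww' : w ⬝ᵥ w = 1 := hww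
    have hvw0' : v ⬝ᵥ w = 0 := hvw0
    obtain ⟨u, hvu, hwu, huu⟩ : ∃ u : Gleason3.E3, v ⬝ᵥ u = 0 ∧ w ⬝ᵥ u = 0 ∧ u ⬝ᵥ u = 1 :=
      ⟨cross3 v w, cross3_dot_left v w, cross3_dot_right v w,
        cross3_dot_self hvv' hww' hvw0'⟩
    have hwv : w ⬝ᵥ v = 0 := by rwa [dotProduct_comm]
    have huv : u ⬝ᵥ v = 0 := by rwa [dotProduct_comm]
    have huw : u ⬝ᵥ w = 0 := by rwa [dotProduct_comm]
    have hev : ∀ᶠ ψ in nhds (0 : ℝ), (Real.cos ψ • v + Real.sin ψ • u, w) ∈ U := by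
      refine evU hU₀ hUeq (γ := fun ψ => (Real.cos ψ • v + Real.sin ψ • u, w)) ?_ ?_
        (fun s => tiltA_mem hvv' hww' hvw0' hvu hwu huu s)
      · fun_prop
      · simpa using hvw
    have hK0 : ∀ᶠ ψ in nhds (0 : ℝ), fD3 f w (Real.cos ψ • u + (-Real.sin ψ) • v)
        (Real.cos ψ • v + Real.sin ψ • u) (Real.cos ψ • v + Real.sin ψ • u) = 0 := by
      filter_upwards [hev] with ψ hψ
      refine KEY2 hCopen hf hhom hU₀ hUeq hCsub hrot _ w _ hψ ?_ ?_ ?_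
      · rw [dot_expand, hvu, hvv', huu, huv]; ring
      · rw [dot_expandR, hwu, hwv]; ring
      · rw [dot_expand, huu, huv, hvu, hvv']; linear_combination Real.sin_sq_add_cos_sq ψ
    rw [Metric.eventually_nhds_iff] at hK0
    obtain ⟨ε, hε, hK⟩ := hK0
    exact master hCopen hf hhom (memC2 hCsub hvw) hww' hvv' huu hwv hwu hvu hε
      (fun ψ hψ => hK (by simpa [Real.dist_eq] using hψ)) _ _ _
end

section
/- Let U be an open subset of the set of ordered pairs (v, w) of orthonormal vectors in ℝ³, and let f : ℝ³ → ℝ be C¹ on an open neighbourhood of ℙ₁U ∪ ℙ₂U. Suppose that for every (v, w) ∈ U and every θ ∈ ℝ with (v cos θ + w sin θ, −v sin θ + w cos θ) ∈ U, one has f(v cos θ + w sin θ) + f(−v sin θ + w cos θ) = f(v) + f(w). Then for every (v, w) ∈ U, w·∇f(v) − v·∇f(w) = 0. -/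
open Matrix

/-- Let `U` be an open subset of the set of ordered pairs of orthonormal vectors of `ℝ³`,
and let `f` be `C¹` on an open neighbourhood of `ℙ₁U ∪ ℙ₂U`. If `f(v) + f(w)` is invariant
under rotations of the orthonormal pair `(v, w)` within `U`, then
`w·∇f(v) − v·∇f(w) = 0` for every `(v, w) ∈ U` (Eq. (31) of the paper). -/
theorem rotation_generator_identity (U : Set ((Fin 3 → ℝ) × (Fin 3 → ℝ)))
    (hUopen : ∃ U₀ : Set ((Fin 3 → ℝ) × (Fin 3 → ℝ)),
      IsOpen U₀ ∧ U = U₀ ∩ OrthonormalPairsR3)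
    (W : Set (Fin 3 → ℝ)) (hWopen : IsOpen W)
    (hWsub : (Prod.fst '' U ∪ Prod.snd '' U) ⊆ W)
    (f : (Fin 3 → ℝ) → ℝ) (hf : ContDiffOn ℝ 1 f W)
    (hrot : ∀ v w : Fin 3 → ℝ, (v, w) ∈ U → ∀ θ : ℝ,
      (Real.cos θ • v + Real.sin θ • w, -(Real.sin θ) • v + Real.cos θ • w) ∈ U →
      f (Real.cos θ • v + Real.sin θ • w) + f (-(Real.sin θ) • v + Real.cos θ • w)
        = f v + f w) :
    ∀ v w : Fin 3 → ℝ, (v, w) ∈ U →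
      fderiv ℝ f v w - fderiv ℝ f w v = 0 := by
  obtain ⟨U₀, hU₀open, rfl⟩ := hUopen
  intro v w hvw
  have hvW : v ∈ W := hWsub (Or.inl ⟨(v, w), hvw, rfl⟩)
  have hwW : w ∈ W := hWsub (Or.inr ⟨(v, w), hvw, rfl⟩)
  have hfv : DifferentiableAt ℝ f v :=
    (hf.differentiableOn one_ne_zero).differentiableAt (hWopen.mem_nhds hvW)
  have hfw : DifferentiableAt ℝ f w :=
    (hf.differentiableOn one_ne_zero).differentiableAt (hWopen.mem_nhds hwW)
  -- the rotated pair
  set c1 : ℝ → (Fin 3 → ℝ) := fun θ => Real.cos θ • v + Real.sin θ • w with hc1def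
  set c2 : ℝ → (Fin 3 → ℝ) := fun θ => -(Real.sin θ) • v + Real.cos θ • w with hc2def
  have hc10 : c1 0 = v := by simp [hc1def]
  have hc20 : c2 0 = w := by simp [hc2def]
  -- rotated pairs are orthonormal
  have hvw' : v ⬝ᵥ v = 1 ∧ w ⬝ᵥ w = 1 ∧ v ⬝ᵥ w = 0 := hvw.2
  obtain ⟨h11, h22, h12⟩ := hvw'
  have h21 : w ⬝ᵥ v = 0 := by rw [dotProduct_comm]; exact h12
  have horth : ∀ θ : ℝ, (c1 θ, c2 θ) ∈ OrthonormalPairsR3 := by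
    intro θ
    have hpyth := Real.sin_sq_add_cos_sq θ
    refine ⟨?_, ?_, ?_⟩ <;>
      simp only [hc1def, hc2def, add_dotProduct, dotProduct_add, smul_dotProduct,
        dotProduct_smul, smul_eq_mul, neg_smul, neg_dotProduct, dotProduct_neg,
        h11, h22, h12, h21, mul_one, mul_zero, neg_zero, add_zero, zero_add,
        neg_mul, mul_neg, neg_neg] <;> nlinarith [hpyth]
  -- continuity: rotated pair lies in U₀ for θ near 0
  have hcont : Continuous fun θ : ℝ => (c1 θ, c2 θ) := by
    exact ((Real.continuous_cos.smul continuous_const).add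
        (Real.continuous_sin.smul continuous_const)).prodMk
      ((Real.continuous_sin.neg.smul continuous_const).add
        (Real.continuous_cos.smul continuous_const))
  have hmem : ∀ᶠ θ in nhds (0 : ℝ), (c1 θ, c2 θ) ∈ U₀ := by
    have : (c1 0, c2 0) ∈ U₀ := by rw [hc10, hc20]; exact hvw.1
    exact hcont.continuousAt (hU₀open.mem_nhds this)
  set g : ℝ → ℝ := fun θ => f (c1 θ) + f (c2 θ) with hgdef
  have hgconst : ∀ᶠ θ in nhds (0 : ℝ), g θ = f v + f w := by
    filter_upwards [hmem] with θ hθ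
    exact hrot v w hvw θ ⟨hθ, horth θ⟩
  have hg0 : g 0 = f v + f w := by simp [hgdef, hc10, hc20]
  have hd0 : HasDerivAt g 0 0 := by
    have : HasDerivAt (fun _ : ℝ => f v + f w) 0 0 := hasDerivAt_const _ _
    refine this.congr_of_eventuallyEq ?_
    filter_upwards [hgconst] with θ hθ using hθ
  -- derivative of the curves
  have hdc1 : HasDerivAt c1 w 0 := by
    have h1 : HasDerivAt (fun θ : ℝ => Real.cos θ • v) ((-Real.sin 0) • v) 0 :=
      (Real.hasDerivAt_cos 0).smul_const v
    have h2 : HasDerivAt (fun θ : ℝ => Real.sin θ • w) ((Real.cos 0) • w) 0 :=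
      (Real.hasDerivAt_sin 0).smul_const w
    have := h1.add h2
    simpa [hc1def, Pi.add_def] using this
  have hdc2 : HasDerivAt c2 (-v) 0 := by
    have h1 : HasDerivAt (fun θ : ℝ => -(Real.sin θ) • v) ((-Real.cos 0) • v) 0 := by
      have := ((Real.hasDerivAt_sin 0).neg).smul_const v
      simpa using this
    have h2 : HasDerivAt (fun θ : ℝ => Real.cos θ • w) ((-Real.sin 0) • w) 0 :=
      (Real.hasDerivAt_cos 0).smul_const w
    have := h1.add h2
    simpa [hc2def, Pi.add_def] using this
  have hd1 : HasDerivAt (fun θ => f (c1 θ)) (fderiv ℝ f v w) 0 := by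
    have := (hc10 ▸ hfv.hasFDerivAt).comp_hasDerivAt 0 hdc1
    simpa [Function.comp_def, hc10] using this
  have hd2 : HasDerivAt (fun θ => f (c2 θ)) (-(fderiv ℝ f w v)) 0 := by
    have := (hc20 ▸ hfw.hasFDerivAt).comp_hasDerivAt 0 hdc2
    simpa [Function.comp_def, hc20] using this
  have hdg : HasDerivAt g (fderiv ℝ f v w - fderiv ℝ f w v) 0 := by
    have := hd1.add hd2
    simpa [hgdef, sub_eq_add_neg, Pi.add_def] using this
  exact hdg.unique hd0
end

section
/- Let U be an open subset of the set of ordered pairs (v, w) of orthonormal vectors in ℝ³, and let f : ℝ³ → ℝ be C² on an open neighbourhood of ℙ₁U ∪ ℙ₂U. Suppose w·∇f(v) − v·∇f(w) = 0 for every (v, w) ∈ U. Then for every (v, w) ∈ U, ∑_{i,j} (v × w)_i w_j ∂²f(v)/∂v_i∂v_j = (v × w)·∇f(w), and symmetrically ∑_{i,j} (v × w)_i v_j ∂²f(w)/∂w_i∂w_j = (v × w)·∇f(v). -/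
open Matrix

lemma key_deriv (f : (Fin 3 → ℝ) → ℝ) (W : Set (Fin 3 → ℝ)) (hWopen : IsOpen W)
    (hf : ContDiffOn ℝ 2 f W) (x y e : Fin 3 → ℝ) (hx : x ∈ W)
    (g : ℝ → (Fin 3 → ℝ)) (hg0 : g 0 = x) (hg : HasDerivAt g e 0)
    (heq : ∀ᶠ t in nhds (0:ℝ), fderiv ℝ f (g t) y - fderiv ℝ f y (g t) = 0) :
    fderiv ℝ (fderiv ℝ f) x e y = fderiv ℝ f y e := by
  subst hg0
  have hfx : ContDiffAt ℝ 2 f (g 0) := hf.contDiffAt (hWopen.mem_nhds hx)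
  have hF : DifferentiableAt ℝ (fderiv ℝ f) (g 0) :=
    (hfx.fderiv_right (m := 1) (by norm_num)).differentiableAt one_ne_zero
  have hcomp : HasDerivAt (fun t => fderiv ℝ f (g t)) (fderiv ℝ (fderiv ℝ f) (g 0) e) 0 :=
    hF.hasFDerivAt.comp_hasDerivAt 0 hg
  have h1 : HasDerivAt (fun t => fderiv ℝ f (g t) y) (fderiv ℝ (fderiv ℝ f) (g 0) e y) 0 :=
    ((ContinuousLinearMap.apply ℝ ℝ y).hasFDerivAt.comp_hasDerivAt 0 hcomp)
  have h2 : HasDerivAt (fun t => fderiv ℝ f y (g t)) (fderiv ℝ f y e) 0 :=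
    (fderiv ℝ f y).hasFDerivAt.comp_hasDerivAt 0 hg
  have hsub := h1.sub h2
  have hzero : HasDerivAt (fun _ : ℝ => (0:ℝ))
      (fderiv ℝ (fderiv ℝ f) (g 0) e y - fderiv ℝ f y e) 0 := by
    refine (Filter.EventuallyEq.hasDerivAt_iff ?_).2 hsub
    filter_upwards [heq] with t ht using ht.symm
  have := hzero.unique (hasDerivAt_const 0 0)
  linarith

lemma rot_curve_hasDerivAt (a p : Fin 3 → ℝ) :
    HasDerivAt (fun t : ℝ => Real.cos t • a + Real.sin t • p) p 0 := by
  have := ((Real.hasDerivAt_cos 0).smul_const a).add ((Real.hasDerivAt_sin 0).smul_const p)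
  refine this.congr_deriv ?_
  simp

/-- Let `U` be an open subset of the set of ordered pairs of orthonormal vectors of `ℝ³`,
and let `f` be `C²` on an open neighbourhood of `ℙ₁U ∪ ℙ₂U` satisfying the first-order
identity `w·∇f(v) − v·∇f(w) = 0` on `U`. Then for every `(v, w) ∈ U`,
`∑ᵢⱼ (v×w)ᵢ wⱼ ∂²f(v)/∂vᵢ∂vⱼ = (v×w)·∇f(w)` and symmetrically
`∑ᵢⱼ (v×w)ᵢ vⱼ ∂²f(w)/∂wᵢ∂wⱼ = (v×w)·∇f(v)` (Eqs. (32)–(33) of the paper). -/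
theorem second_order_rotation_identities (U : Set ((Fin 3 → ℝ) × (Fin 3 → ℝ)))
    (hUopen : ∃ U₀ : Set ((Fin 3 → ℝ) × (Fin 3 → ℝ)),
      IsOpen U₀ ∧ U = U₀ ∩ OrthonormalPairsR3)
    (W : Set (Fin 3 → ℝ)) (hWopen : IsOpen W)
    (hWsub : (Prod.fst '' U ∪ Prod.snd '' U) ⊆ W)
    (f : (Fin 3 → ℝ) → ℝ) (hf : ContDiffOn ℝ 2 f W)
    (hfirst : ∀ v w : Fin 3 → ℝ, (v, w) ∈ U →
      fderiv ℝ f v w - fderiv ℝ f w v = 0) :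
    ∀ v w : Fin 3 → ℝ, (v, w) ∈ U →
      iteratedFDeriv ℝ 2 f v ![crossProduct v w, w]
          = fderiv ℝ f w (crossProduct v w) ∧
      iteratedFDeriv ℝ 2 f w ![crossProduct v w, v]
          = fderiv ℝ f v (crossProduct v w) := by
  obtain ⟨U₀, hU₀open, rfl⟩ := hUopen
  intro v w hvw
  obtain ⟨hvwU₀, hvv, hww, hvw0⟩ :
      (v, w) ∈ U₀ ∧ v ⬝ᵥ v = 1 ∧ w ⬝ᵥ w = 1 ∧ v ⬝ᵥ w = 0 :=
    ⟨hvw.1, hvw.2.1, hvw.2.2.1, hvw.2.2.2⟩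
  have hvW : v ∈ W := hWsub (Or.inl ⟨(v, w), hvw, rfl⟩)
  have hwW : w ∈ W := hWsub (Or.inr ⟨(v, w), hvw, rfl⟩)
  have hpp : crossProduct v w ⬝ᵥ crossProduct v w = 1 := by
    have h1 := hvv; have h2 := hww; have h3 := hvw0
    simp only [crossProduct, dotProduct, Fin.sum_univ_three] at h1 h2 h3 ⊢
    simp only [LinearMap.mk₂_apply, Matrix.cons_val_zero, Matrix.cons_val_one,
      Matrix.head_cons, Matrix.cons_val_two, Matrix.tail_cons]
    nlinarith [h1, h2, h3]
  have hvp : v ⬝ᵥ crossProduct v w = 0 := by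
    simp [crossProduct, dotProduct, Fin.sum_univ_three]; ring
  have hwp : w ⬝ᵥ crossProduct v w = 0 := by
    simp [crossProduct, dotProduct, Fin.sum_univ_three]; ring
  set p := crossProduct v w with hp
  -- curve 1: rotate v, keep w fixed
  have hS1 : ∀ t : ℝ, (Real.cos t • v + Real.sin t • p, w) ∈ OrthonormalPairsR3 := by
    intro t
    refine ⟨?_, hww, ?_⟩
    · simp only [add_dotProduct, dotProduct_add, smul_dotProduct, dotProduct_smul,
        smul_eq_mul, hvv, hpp, hvp, dotProduct_comm p v]
      nlinarith [Real.sin_sq_add_cos_sq t]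
    · simp only [add_dotProduct, smul_dotProduct, smul_eq_mul, hvw0, dotProduct_comm p w, hwp]
      ring
  have hS2 : ∀ t : ℝ, (v, Real.cos t • w + Real.sin t • p) ∈ OrthonormalPairsR3 := by
    intro t
    refine ⟨hvv, ?_, ?_⟩
    · simp only [add_dotProduct, dotProduct_add, smul_dotProduct, dotProduct_smul,
        smul_eq_mul, hww, hpp, hwp, dotProduct_comm p w]
      nlinarith [Real.sin_sq_add_cos_sq t]
    · simp only [dotProduct_add, dotProduct_smul, smul_eq_mul, hvw0, hvp]
      ring
  have hcont1 : Continuous (fun t : ℝ => (Real.cos t • v + Real.sin t • p, w)) := by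
    exact ((Real.continuous_cos.smul continuous_const).add
      (Real.continuous_sin.smul continuous_const)).prodMk continuous_const
  have hcont2 : Continuous (fun t : ℝ => ((v : Fin 3 → ℝ), Real.cos t • w + Real.sin t • p)) := by
    exact continuous_const.prodMk ((Real.continuous_cos.smul continuous_const).add
      (Real.continuous_sin.smul continuous_const))
  have hev1 : ∀ᶠ t in nhds (0:ℝ), (Real.cos t • v + Real.sin t • p, w) ∈ U₀ := by
    have h0 : (Real.cos 0 • v + Real.sin 0 • p, w) = (v, w) := by simp
    have := hcont1.continuousAt (x := 0) |>.preimage_mem_nhds (h0 ▸ hU₀open.mem_nhds hvwU₀)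
    exact this
  have hev2 : ∀ᶠ t in nhds (0:ℝ), ((v : Fin 3 → ℝ), Real.cos t • w + Real.sin t • p) ∈ U₀ := by
    have h0 : ((v : Fin 3 → ℝ), Real.cos 0 • w + Real.sin 0 • p) = (v, w) := by simp
    have := hcont2.continuousAt (x := 0) |>.preimage_mem_nhds (h0 ▸ hU₀open.mem_nhds hvwU₀)
    exact this
  have heq1 : ∀ᶠ t in nhds (0:ℝ),
      fderiv ℝ f (Real.cos t • v + Real.sin t • p) w
        - fderiv ℝ f w (Real.cos t • v + Real.sin t • p) = 0 := by
    filter_upwards [hev1] with t ht using hfirst _ w ⟨ht, hS1 t⟩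
  have heq2 : ∀ᶠ t in nhds (0:ℝ),
      fderiv ℝ f (Real.cos t • w + Real.sin t • p) v
        - fderiv ℝ f v (Real.cos t • w + Real.sin t • p) = 0 := by
    filter_upwards [hev2] with t ht
    have := hfirst v _ ⟨ht, hS2 t⟩
    linarith
  have e1 := key_deriv f W hWopen hf v w p hvW
    (fun t => Real.cos t • v + Real.sin t • p) (by simp) (rot_curve_hasDerivAt v p) heq1
  have e2 := key_deriv f W hWopen hf w v p hwW
    (fun t => Real.cos t • w + Real.sin t • p) (by simp) (rot_curve_hasDerivAt w p) heq2
  constructor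
  · rw [iteratedFDeriv_two_apply]
    simpa using e1
  · rw [iteratedFDeriv_two_apply]
    simpa using e2
end

section
/- Let U be an open subset of the set of ordered pairs (v, w) of orthonormal vectors in ℝ³, and let f : ℝ³ → ℝ be C³ on an open cone containing ℙ₁U ∪ ℙ₂U, satisfying there the radial constraint x·∇f(x) = 2f(x). Suppose that for every (v, w) ∈ U and every θ ∈ ℝ with (v cos θ + w sin θ, −v sin θ + w cos θ) ∈ U, one has f(v cos θ + w sin θ) + f(−v sin θ + w cos θ) = f(v) + f(w). Then for every (v, w) ∈ U, setting u = v × w, ∑_{i,j,k} u_i w_j w_k ∂³f(v)/∂v_i∂v_j∂v_k = 0. -/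
open Matrix

/-- Let `U` be an open subset of the set of ordered pairs of orthonormal vectors of `ℝ³`,
and let `f` be `C³` on an open cone containing `ℙ₁U ∪ ℙ₂U`, satisfying there the radial
constraint `x·∇f(x) = 2f(x)`. If `f(v) + f(w)` is invariant under rotations of the
orthonormal pair `(v, w)` within `U`, then for every `(v, w) ∈ U`, setting `u = v × w`,
`∑ᵢⱼₖ uᵢ wⱼ wₖ ∂³f(v)/∂vᵢ∂vⱼ∂vₖ = 0` (Eqs. (35)–(36) of the paper). -/
theorem third_order_identity (U : Set ((Fin 3 → ℝ) × (Fin 3 → ℝ)))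
    (hUopen : ∃ U₀ : Set ((Fin 3 → ℝ) × (Fin 3 → ℝ)),
      IsOpen U₀ ∧ U = U₀ ∩ OrthonormalPairsR3)
    (C : Set (Fin 3 → ℝ)) (hCopen : IsOpen C)
    (hCcone : ∀ x ∈ C, ∀ t : ℝ, 0 < t → t • x ∈ C)
    (hCsub : (Prod.fst '' U ∪ Prod.snd '' U) ⊆ C)
    (f : (Fin 3 → ℝ) → ℝ) (hf : ContDiffOn ℝ 3 f C)
    (hradial : ∀ x ∈ C, fderiv ℝ f x x = 2 * f x)
    (hrot : ∀ v w : Fin 3 → ℝ, (v, w) ∈ U → ∀ θ : ℝ,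
      (Real.cos θ • v + Real.sin θ • w, -(Real.sin θ) • v + Real.cos θ • w) ∈ U →
      f (Real.cos θ • v + Real.sin θ • w) + f (-(Real.sin θ) • v + Real.cos θ • w)
        = f v + f w) :
    ∀ v w : Fin 3 → ℝ, (v, w) ∈ U →
      iteratedFDeriv ℝ 3 f v ![crossProduct v w, w, w] = 0 := by
  obtain ⟨U₀, hU₀open, rfl⟩ := hUopen
  -- basic differentiability facts
  have hC : ∀ x ∈ C, ContDiffAt ℝ 3 f x := fun x hx => hf.contDiffAt (hCopen.mem_nhds hx)
  have hd0 : ∀ x ∈ C, DifferentiableAt ℝ f x := fun x hx =>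
    (hC x hx).differentiableAt (by norm_num)
  have hC1 : ∀ x ∈ C, ContDiffAt ℝ 2 (fderiv ℝ f) x := fun x hx =>
    (hC x hx).fderiv_right (by norm_num)
  have hd1 : ∀ x ∈ C, DifferentiableAt ℝ (fderiv ℝ f) x := fun x hx =>
    (hC1 x hx).differentiableAt (by norm_num)
  have hd2 : ∀ x ∈ C, DifferentiableAt ℝ (fderiv ℝ (fderiv ℝ f)) x := fun x hx =>
    ((hC1 x hx).fderiv_right (m := 1) (by norm_num)).differentiableAt (by norm_num)
  -- memberships in the cone
  have hmemC : ∀ v w : Fin 3 → ℝ, (v, w) ∈ U₀ ∩ OrthonormalPairsR3 → v ∈ C ∧ w ∈ C := by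
    intro v w hvw
    exact ⟨hCsub (Or.inl ⟨(v, w), hvw, rfl⟩), hCsub (Or.inr ⟨(v, w), hvw, rfl⟩)⟩
  -- derivative of an eventually vanishing function vanishes
  have key : ∀ {φ : ℝ → ℝ} {D : ℝ}, HasDerivAt φ D 0 → (∀ᶠ t in nhds (0:ℝ), φ t = 0) →
      D = 0 := by
    intro φ D hD h
    exact hD.unique ((hasDerivAt_const (0:ℝ) (0:ℝ)).congr_of_eventuallyEq h)
  -- derivatives of the basic curves
  have hcurve : ∀ a b : Fin 3 → ℝ,
      HasDerivAt (fun t : ℝ => Real.cos t • a + Real.sin t • b) b 0 := by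
    intro a b
    have h1 := ((Real.hasDerivAt_cos 0).smul_const a).add ((Real.hasDerivAt_sin 0).smul_const b)
    simpa [Pi.add_def] using h1
  have hcurve2 : ∀ a b : Fin 3 → ℝ,
      HasDerivAt (fun t : ℝ => -(Real.sin t) • a + Real.cos t • b) (-a) 0 := by
    intro a b
    have h1 := (((Real.hasDerivAt_sin 0).neg).smul_const a).add
      ((Real.hasDerivAt_cos 0).smul_const b)
    simpa [Pi.add_def] using h1
  -- orthonormality of rotated pairs
  have hMrot : ∀ p q : Fin 3 → ℝ, p ⬝ᵥ p = 1 → q ⬝ᵥ q = 1 → p ⬝ᵥ q = 0 → ∀ t : ℝ,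
      ((Real.cos t • p + Real.sin t • q) ⬝ᵥ (Real.cos t • p + Real.sin t • q) = 1) ∧
      ((-(Real.sin t) • p + Real.cos t • q) ⬝ᵥ (-(Real.sin t) • p + Real.cos t • q) = 1) ∧
      ((Real.cos t • p + Real.sin t • q) ⬝ᵥ (-(Real.sin t) • p + Real.cos t • q) = 0) := by
    intro p q hp hq hpq t
    have hqp : q ⬝ᵥ p = 0 := by rwa [dotProduct_comm]
    refine ⟨?_, ?_, ?_⟩ <;>
    · simp only [dotProduct_add, add_dotProduct, dotProduct_smul, smul_dotProduct, smul_eq_mul,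
        hp, hq, hpq, hqp, mul_zero, mul_one, add_zero, zero_add, neg_mul, mul_neg, neg_neg,
        neg_zero]
      nlinarith [Real.sin_sq_add_cos_sq t]
  -- eventual membership in U along a continuous curve
  have hevU : ∀ γ : ℝ → (Fin 3 → ℝ) × (Fin 3 → ℝ), ContinuousAt γ 0 → γ 0 ∈ U₀ →
      (∀ t, γ t ∈ OrthonormalPairsR3) →
      ∀ᶠ t in nhds (0:ℝ), γ t ∈ U₀ ∩ OrthonormalPairsR3 := by
    intro γ hcont h0 hM
    filter_upwards [hcont.preimage_mem_nhds (hU₀open.mem_nhds h0)] with t ht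
    exact ⟨ht, hM t⟩
  -- Step G : first-order identity
  have hG : ∀ v w : Fin 3 → ℝ, (v, w) ∈ U₀ ∩ OrthonormalPairsR3 →
      fderiv ℝ f v w = fderiv ℝ f w v := by
    intro v w hvw
    obtain ⟨hvC, hwC⟩ := hmemC v w hvw
    obtain ⟨hvv, hww, hvw0⟩ := hvw.2
    have ha := hcurve v w
    have hb := hcurve2 v w
    have hev : ∀ᶠ t in nhds (0:ℝ),
        (Real.cos t • v + Real.sin t • w, -(Real.sin t) • v + Real.cos t • w) ∈
          U₀ ∩ OrthonormalPairsR3 := by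
      apply hevU _ (by fun_prop) (by simpa using hvw.1)
      intro t
      exact hMrot v w hvv hww hvw0 t
    have h1 : HasDerivAt (fun t : ℝ => f (Real.cos t • v + Real.sin t • w))
        (fderiv ℝ f v w) 0 := by
      have := (hd0 v hvC).hasFDerivAt.comp_hasDerivAt_of_eq 0 ha (by simp)
      simpa [Function.comp_def] using this
    have h2 : HasDerivAt (fun t : ℝ => f (-(Real.sin t) • v + Real.cos t • w))
        (fderiv ℝ f w (-v)) 0 := by
      have := (hd0 w hwC).hasFDerivAt.comp_hasDerivAt_of_eq 0 hb (by simp)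
      simpa [Function.comp_def] using this
    have hD := h1.add h2
    have hφ : ∀ᶠ t in nhds (0:ℝ),
        f (Real.cos t • v + Real.sin t • w) + f (-(Real.sin t) • v + Real.cos t • w)
          - (f v + f w) = 0 := by
      filter_upwards [hev] with t ht
      rw [hrot v w hvw t ht]
      ring
    have hE := key (hD.sub (hasDerivAt_const (0:ℝ) (f v + f w))) hφ
    simp only [map_neg, sub_zero] at hE
    linarith
  -- Step F : second-order identity
  have hF : ∀ v w : Fin 3 → ℝ, (v, w) ∈ U₀ ∩ OrthonormalPairsR3 →
      fderiv ℝ (fderiv ℝ f) v w w + fderiv ℝ (fderiv ℝ f) w v v = 2 * f v + 2 * f w := by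
    intro v w hvw
    obtain ⟨hvC, hwC⟩ := hmemC v w hvw
    obtain ⟨hvv, hww, hvw0⟩ := hvw.2
    have ha := hcurve v w
    have hb := hcurve2 v w
    have hev : ∀ᶠ t in nhds (0:ℝ),
        (Real.cos t • v + Real.sin t • w, -(Real.sin t) • v + Real.cos t • w) ∈
          U₀ ∩ OrthonormalPairsR3 := by
      apply hevU _ (by fun_prop) (by simpa using hvw.1)
      intro t
      exact hMrot v w hvv hww hvw0 t
    have hDa : HasDerivAt (fun t : ℝ => fderiv ℝ f (Real.cos t • v + Real.sin t • w))
        (fderiv ℝ (fderiv ℝ f) v w) 0 := by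
      have := (hd1 v hvC).hasFDerivAt.comp_hasDerivAt_of_eq 0 ha (by simp)
      simpa [Function.comp_def] using this
    have hDb : HasDerivAt (fun t : ℝ => fderiv ℝ f (-(Real.sin t) • v + Real.cos t • w))
        (fderiv ℝ (fderiv ℝ f) w (-v)) 0 := by
      have := (hd1 w hwC).hasFDerivAt.comp_hasDerivAt_of_eq 0 hb (by simp)
      simpa [Function.comp_def] using this
    have h1 : HasDerivAt
        (fun t : ℝ => fderiv ℝ f (Real.cos t • v + Real.sin t • w)
          (-(Real.sin t) • v + Real.cos t • w))
        (fderiv ℝ (fderiv ℝ f) v w w - fderiv ℝ f v v) 0 := by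
      have := hDa.clm_apply hb
      simp only [Real.cos_zero, Real.sin_zero, one_smul, zero_smul, neg_zero, zero_add,
        add_zero, map_neg] at this
      simpa [sub_eq_add_neg] using this
    have h2 : HasDerivAt
        (fun t : ℝ => fderiv ℝ f (-(Real.sin t) • v + Real.cos t • w)
          (Real.cos t • v + Real.sin t • w))
        (-(fderiv ℝ (fderiv ℝ f) w v v) + fderiv ℝ f w w) 0 := by
      have := hDb.clm_apply ha
      simp only [Real.cos_zero, Real.sin_zero, one_smul, zero_smul, neg_zero, zero_add,
        add_zero, map_neg, ContinuousLinearMap.neg_apply] at this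
      simpa using this
    have hφ : ∀ᶠ t in nhds (0:ℝ),
        fderiv ℝ f (Real.cos t • v + Real.sin t • w)
            (-(Real.sin t) • v + Real.cos t • w)
          - fderiv ℝ f (-(Real.sin t) • v + Real.cos t • w)
            (Real.cos t • v + Real.sin t • w) = 0 := by
      filter_upwards [hev] with t ht
      rw [hG _ _ ht]
      ring
    have hE := key (h1.sub h2) hφ
    have hrv := hradial v hvC
    have hrw := hradial w hwC
    linarith
  -- Step G' : mixed second-order identity with u = v ×₃ w
  have hG' : ∀ v w : Fin 3 → ℝ, (v, w) ∈ U₀ ∩ OrthonormalPairsR3 →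
      fderiv ℝ (fderiv ℝ f) w (crossProduct v w) v = fderiv ℝ f v (crossProduct v w) := by
    intro v w hvw
    obtain ⟨hvC, hwC⟩ := hmemC v w hvw
    obtain ⟨hvv, hww, hvw0⟩ := hvw.2
    set u := crossProduct v w with hu
    have huu : u ⬝ᵥ u = 1 := by
      rw [hu, cross_dot_cross, hvv, hww, dotProduct_comm w v, hvw0]
      norm_num
    have hvu : v ⬝ᵥ u = 0 := dot_self_cross v w
    have hwu : w ⬝ᵥ u = 0 := dot_cross_self v w
    have hd := hcurve w u
    have hev : ∀ᶠ t in nhds (0:ℝ),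
        (v, Real.cos t • w + Real.sin t • u) ∈ U₀ ∩ OrthonormalPairsR3 := by
      apply hevU _ (by fun_prop) (by simpa using hvw.1)
      intro t
      refine ⟨hvv, (hMrot w u hww huu hwu t).1, ?_⟩
      simp only [dotProduct_add, dotProduct_smul, smul_eq_mul, hvw0, hvu, mul_zero, add_zero]
    have h1 : HasDerivAt (fun t : ℝ => fderiv ℝ f v (Real.cos t • w + Real.sin t • u))
        (fderiv ℝ f v u) 0 := by
      have := (fderiv ℝ f v).hasFDerivAt.comp_hasDerivAt 0 hd
      simpa [Function.comp_def] using this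
    have hDd : HasDerivAt (fun t : ℝ => fderiv ℝ f (Real.cos t • w + Real.sin t • u))
        (fderiv ℝ (fderiv ℝ f) w u) 0 := by
      have := (hd1 w hwC).hasFDerivAt.comp_hasDerivAt_of_eq 0 hd (by simp)
      simpa [Function.comp_def] using this
    have h2 : HasDerivAt (fun t : ℝ => fderiv ℝ f (Real.cos t • w + Real.sin t • u) v)
        (fderiv ℝ (fderiv ℝ f) w u v) 0 := by
      have := hDd.clm_apply (hasDerivAt_const (0:ℝ) v)
      simpa using this
    have hφ : ∀ᶠ t in nhds (0:ℝ),
        fderiv ℝ f v (Real.cos t • w + Real.sin t • u)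
          - fderiv ℝ f (Real.cos t • w + Real.sin t • u) v = 0 := by
      filter_upwards [hev] with t ht
      rw [hG _ _ ht]
      ring
    have hE := key (h1.sub h2) hφ
    linarith
  -- Main argument
  intro v w hvw
  obtain ⟨hvC, hwC⟩ := hmemC v w hvw
  obtain ⟨hvv, hww, hvw0⟩ := hvw.2
  set u := crossProduct v w with hu
  have huu : u ⬝ᵥ u = 1 := by
    rw [hu, cross_dot_cross, hvv, hww, dotProduct_comm w v, hvw0]
    norm_num
  have hvu : v ⬝ᵥ u = 0 := dot_self_cross v w
  have hwu : w ⬝ᵥ u = 0 := dot_cross_self v w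
  have huw : u ⬝ᵥ w = 0 := by rwa [dotProduct_comm]
  have hc := hcurve v u
  have hev : ∀ᶠ t in nhds (0:ℝ),
      (Real.cos t • v + Real.sin t • u, w) ∈ U₀ ∩ OrthonormalPairsR3 := by
    apply hevU _ (by fun_prop) (by simpa using hvw.1)
    intro t
    refine ⟨(hMrot v u hvv huu hvu t).1, hww, ?_⟩
    simp only [add_dotProduct, smul_dotProduct, smul_eq_mul, hvw0, huw, mul_zero, add_zero]
  -- the Fréchet derivative of x ↦ fderiv (fderiv f) x w w at v
  have hB0 : HasFDerivAt (fderiv ℝ (fderiv ℝ f))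
      (fderiv ℝ (fderiv ℝ (fderiv ℝ f)) v) v := (hd2 v hvC).hasFDerivAt
  have hB1 := hB0.clm_apply (hasFDerivAt_const w v)
  have hB2 := hB1.clm_apply (hasFDerivAt_const w v)
  -- derivative of ψ₁ along the curve
  have h1 : HasDerivAt (fun t : ℝ =>
      fderiv ℝ (fderiv ℝ f) (Real.cos t • v + Real.sin t • u) w w)
      (fderiv ℝ (fderiv ℝ (fderiv ℝ f)) v u w w) 0 := by
    have := hB2.comp_hasDerivAt_of_eq 0 hc (by simp)
    simp only [Function.comp_def] at this
    refine this.congr_deriv ?_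
    simp
  -- derivative of ψ₂ along the curve
  have h2a : HasDerivAt (fun t : ℝ =>
      fderiv ℝ (fderiv ℝ f) w (Real.cos t • v + Real.sin t • u))
      (fderiv ℝ (fderiv ℝ f) w u) 0 := by
    have := (fderiv ℝ (fderiv ℝ f) w).hasFDerivAt.comp_hasDerivAt 0 hc
    simpa [Function.comp_def] using this
  have h2 : HasDerivAt (fun t : ℝ =>
      fderiv ℝ (fderiv ℝ f) w (Real.cos t • v + Real.sin t • u)
        (Real.cos t • v + Real.sin t • u))
      (fderiv ℝ (fderiv ℝ f) w u v + fderiv ℝ (fderiv ℝ f) w v u) 0 := by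
    have := h2a.clm_apply hc
    simp only [Real.cos_zero, Real.sin_zero, one_smul, zero_smul, add_zero] at this
    exact this
  -- derivative of ψ₃ along the curve
  have h3 : HasDerivAt (fun t : ℝ => f (Real.cos t • v + Real.sin t • u))
      (fderiv ℝ f v u) 0 := by
    have := (hd0 v hvC).hasFDerivAt.comp_hasDerivAt_of_eq 0 hc (by simp)
    simpa [Function.comp_def] using this
  have hφ : ∀ᶠ t in nhds (0:ℝ),
      fderiv ℝ (fderiv ℝ f) (Real.cos t • v + Real.sin t • u) w w
        + fderiv ℝ (fderiv ℝ f) w (Real.cos t • v + Real.sin t • u)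
            (Real.cos t • v + Real.sin t • u)
        - (2 * f (Real.cos t • v + Real.sin t • u) + 2 * f w) = 0 := by
    filter_upwards [hev] with t ht
    rw [hF _ _ ht]
    ring
  have hE := key (((h1.add h2).sub ((h3.const_mul 2).add (hasDerivAt_const (0:ℝ) (2 * f w))))) hφ
  have hsub1 : fderiv ℝ (fderiv ℝ f) w u v = fderiv ℝ f v u := hG' v w hvw
  have hsym : fderiv ℝ (fderiv ℝ f) w v u = fderiv ℝ (fderiv ℝ f) w u v :=
    ((hC w hwC).isSymmSndFDerivAt (by norm_num)) v u
  have hT : fderiv ℝ (fderiv ℝ (fderiv ℝ f)) v u w w = 0 := by linarith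
  have hitd : iteratedFDeriv ℝ 3 f v ![u, w, w]
      = fderiv ℝ (fderiv ℝ (fderiv ℝ f)) v u w w := by
    rw [iteratedFDeriv_succ_apply_right, iteratedFDeriv_two_apply]
    rfl
  rw [hitd, hT]
end

section
/- Let T : ℝ³ × ℝ³ × ℝ³ → ℝ be a symmetric trilinear form, let v ∈ ℝ³ be nonzero, and suppose T(u, w, w) = 0 for all vectors u, w orthogonal to v with u·w = 0. Then T(w, w, w) = 0 for every w orthogonal to v. -/
open Matrix

/-- If a symmetric trilinear form `T` on `ℝ³` satisfies `T(u, w, w) = 0` for all `u, w`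
orthogonal to a nonzero vector `v` with `u·w = 0`, then `T(w, w, w) = 0` for every `w`
orthogonal to `v` (the step from Eq. (37) to Eq. (38) in the paper). -/
theorem diagonal_vanishes_on_orthogonal_plane
    (T : (Fin 3 → ℝ) →ₗ[ℝ] (Fin 3 → ℝ) →ₗ[ℝ] (Fin 3 → ℝ) →ₗ[ℝ] ℝ)
    (hsymm₁₂ : ∀ a b c : Fin 3 → ℝ, T a b c = T b a c)
    (hsymm₂₃ : ∀ a b c : Fin 3 → ℝ, T a b c = T a c b)
    (v : Fin 3 → ℝ) (hv : v ≠ 0)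
    (h : ∀ u w : Fin 3 → ℝ, u ⬝ᵥ v = 0 → w ⬝ᵥ v = 0 → u ⬝ᵥ w = 0 → T u w w = 0) :
    ∀ w : Fin 3 → ℝ, w ⬝ᵥ v = 0 → T w w w = 0 := by
  intro w hw
  have hvw : v ⬝ᵥ w = 0 := by rwa [dotProduct_comm] at hw
  have hvv_nonneg : 0 ≤ v ⬝ᵥ v :=
    Finset.sum_nonneg fun i _ => mul_self_nonneg (v i)
  set s : ℝ := Real.sqrt (v ⬝ᵥ v) with hs_def
  have hs2 : s * s = v ⬝ᵥ v := Real.mul_self_sqrt hvv_nonneg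
  have hs0 : s ≠ 0 := by
    intro h0
    apply hv
    rw [← dotProduct_self_eq_zero (v := v), ← hs2, h0, mul_zero]
  set b : Fin 3 → ℝ := crossProduct v w with hb_def
  set a : Fin 3 → ℝ := s • w with ha_def
  -- orthogonality facts
  have hbv : b ⬝ᵥ v = 0 := by rw [dotProduct_comm]; exact dot_self_cross v w
  have hbw : b ⬝ᵥ w = 0 := by rw [dotProduct_comm]; exact dot_cross_self v w
  have hav : a ⬝ᵥ v = 0 := by rw [ha_def, smul_dotProduct, hw, smul_zero]
  have hba : b ⬝ᵥ a = 0 := by rw [ha_def, dotProduct_smul, hbw, smul_zero]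
  have hab : a ⬝ᵥ b = 0 := by rwa [dotProduct_comm]
  have hbb : b ⬝ᵥ b = (v ⬝ᵥ v) * (w ⬝ᵥ w) := by
    rw [hb_def, cross_dot_cross, hvw]; ring
  have haa : a ⬝ᵥ a = (v ⬝ᵥ v) * (w ⬝ᵥ w) := by
    rw [ha_def, smul_dotProduct, dotProduct_smul, smul_eq_mul, smul_eq_mul, ← hs2]; ring
  -- the four hypotheses from h
  have hS : T b a a = 0 := h b a hbv hav hba
  have hP : T a b b = 0 := h a b hav hbv hab
  have hapv : (a + b) ⬝ᵥ v = 0 := by rw [add_dotProduct, hav, hbv, add_zero]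
  have hamv : (a - b) ⬝ᵥ v = 0 := by rw [sub_dotProduct, hav, hbv, sub_zero]
  have hperp : (a + b) ⬝ᵥ (a - b) = 0 := by
    rw [add_dotProduct, dotProduct_sub, dotProduct_sub, haa, hbb, hab, hba]; ring
  have hperp' : (a - b) ⬝ᵥ (a + b) = 0 := by rwa [dotProduct_comm]
  have hE1 : T (a + b) (a - b) (a - b) = 0 := h _ _ hapv hamv hperp
  have hE2 : T (a - b) (a + b) (a + b) = 0 := h _ _ hamv hapv hperp'
  simp only [map_add, map_sub, LinearMap.add_apply, LinearMap.sub_apply] at hE1 hE2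
  have s1 : T a b a = T a a b := hsymm₂₃ a b a
  have s2 : T b a a = T a b a := hsymm₁₂ b a a
  have s3 : T b a b = T a b b := hsymm₁₂ b a b
  have s4 : T b b a = T b a b := hsymm₂₃ b b a
  have hTaaa : T a a a = 0 := by linarith [hE1, hE2]
  have heq : T a a a = s * (s * (s * T w w w)) := by
    rw [ha_def]
    simp [LinearMap.map_smul, LinearMap.smul_apply, smul_eq_mul]
  rw [hTaaa] at heq
  have hs3 : s * (s * s) ≠ 0 := mul_ne_zero hs0 (mul_ne_zero hs0 hs0)
  have hkey : s * (s * s) * T w w w = 0 := by linarith [heq]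
  exact (mul_eq_zero.mp hkey).resolve_left hs3
end

section
/- Let μ be a real-valued function on the orthogonal projections of ℂ^N satisfying: (i) μ(E) ≥ 0 for every orthogonal projection E; (ii) μ(1) = 1; (iii) μ(E₁) + μ(E₂) = μ(E₁ + E₂) for every pair of commuting orthogonal projections E₁, E₂ with E₁E₂ = 0; and (iv) there exist a Hermitian operator η and a real constant K with μ(P) = tr(ηP) + K for every rank-1 orthogonal projection P. Then ρ := η + K·1 is positive semidefinite with tr ρ = 1, and μ(E) = tr(ρE) for every orthogonal projection E. -/
open scoped ComplexOrder

/-- An orthogonal projection on `ℂ^N`: a linear operator `E` with `E² = E = E†`. -/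
def IsProjection {N : ℕ} (E : Matrix (Fin N) (Fin N) ℂ) : Prop :=
  E * E = E ∧ E.IsHermitian

open Matrix in
lemma gleasonConjMul {N : ℕ} {V : Matrix (Fin N) (Fin N) ℂ} (h2 : Vᴴ * V = 1) (i j : Fin N) :
    (V * single i i 1 * Vᴴ) * (V * single j j 1 * Vᴴ) =
      if i = j then V * single i i 1 * Vᴴ else 0 := by
  have : (V * single i i 1 * Vᴴ) * (V * single j j 1 * Vᴴ)
      = V * (single i i 1 * single j j 1) * Vᴴ := by
    simp only [mul_assoc]
    rw [← mul_assoc Vᴴ V, h2, one_mul]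
  rw [this]
  by_cases h : i = j
  · subst h; simp
  · simp [single_mul_single_of_ne, h]

open Matrix in
lemma gleasonConjProj {N : ℕ} {V : Matrix (Fin N) (Fin N) ℂ} (h1 : V * Vᴴ = 1) (h2 : Vᴴ * V = 1)
    (i : Fin N) :
    IsProjection (V * single i i 1 * Vᴴ) ∧
    (V * single i i 1 * Vᴴ).rank = 1 ∧
    (V * single i i 1 * Vᴴ).trace = 1 := by
  have hdet1 : IsUnit V.det := by
    apply IsUnit.of_mul_eq_one Vᴴ.det
    rw [← det_mul, h1, det_one]
  have hdet2 : IsUnit Vᴴ.det := by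
    apply IsUnit.of_mul_eq_one V.det
    rw [← det_mul, h2, det_one]
  refine ⟨⟨by simpa using gleasonConjMul h2 i i, ?_⟩, ?_, ?_⟩
  · unfold Matrix.IsHermitian
    have hstd : (single i i (1:ℂ))ᴴ = single i i 1 := by
      ext a b; simp [single]; aesop
    simp [conjTranspose_mul, hstd, mul_assoc]
  · rw [Matrix.rank_mul_eq_left_of_isUnit_det Vᴴ (V * single i i 1) hdet2,
      Matrix.rank_mul_eq_right_of_isUnit_det V (single i i 1) hdet1]
    have hd : single i i (1:ℂ) = diagonal (Pi.single i 1) := by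
      ext a b; simp [single, diagonal, Pi.single_apply]; aesop
    have h : ∀ a : Fin N, ((Pi.single i (1:ℂ) : Fin N → ℂ) a ≠ 0) ↔ a = i := by
      intro a; simp [Pi.single_apply]
    rw [hd, rank_diagonal, Fintype.card_congr (Equiv.subtypeEquivRight h),
      Fintype.card_subtype_eq]
  · rw [trace_mul_cycle, h2, one_mul, trace_single_eq_same]

open Matrix in
/-- Gleason's theorem as a corollary of the generalized Gleason theorem. If `μ` is a
nonnegative real-valued function on the orthogonal projections of `ℂ^N` with `μ(1) = 1`,
additive on commuting orthogonal projections with `E₁E₂ = 0`, and of the form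
`μ(P) = tr(ηP) + K` on rank-1 orthogonal projections for some Hermitian `η` and real `K`,
then `ρ := η + K·1` is positive semidefinite with `tr ρ = 1` and `μ(E) = tr(ρE)` for every
orthogonal projection `E`. -/
theorem gleason_from_generalized (N : ℕ) (μ : Matrix (Fin N) (Fin N) ℂ → ℝ)
    (hpos : ∀ E : Matrix (Fin N) (Fin N) ℂ, IsProjection E → 0 ≤ μ E)
    (hone : μ 1 = 1)
    (hadd : ∀ E₁ E₂ : Matrix (Fin N) (Fin N) ℂ, IsProjection E₁ → IsProjection E₂ →
      Commute E₁ E₂ → E₁ * E₂ = 0 → μ E₁ + μ E₂ = μ (E₁ + E₂))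
    (η : Matrix (Fin N) (Fin N) ℂ) (hη : η.IsHermitian) (K : ℝ)
    (hlin : ∀ P : Matrix (Fin N) (Fin N) ℂ, IsProjection P → P.rank = 1 →
      (μ P : ℂ) = (η * P).trace + (K : ℂ)) :
    (η + (K : ℂ) • (1 : Matrix (Fin N) (Fin N) ℂ)).PosSemidef ∧
    (η + (K : ℂ) • (1 : Matrix (Fin N) (Fin N) ℂ)).trace = 1 ∧
    ∀ E : Matrix (Fin N) (Fin N) ℂ, IsProjection E →
      (μ E : ℂ) = ((η + (K : ℂ) • (1 : Matrix (Fin N) (Fin N) ℂ)) * E).trace := by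
  classical
  set ρ : Matrix (Fin N) (Fin N) ℂ := η + (K : ℂ) • 1 with hρdef
  -- μ at rank-1 projections with trace 1 equals trace ρ P
  have hrank1 : ∀ P : Matrix (Fin N) (Fin N) ℂ, IsProjection P → P.rank = 1 → P.trace = 1 →
      (μ P : ℂ) = (ρ * P).trace := by
    intro P hP hr ht
    rw [hρdef, add_mul, Matrix.smul_mul, one_mul, Matrix.trace_add, Matrix.trace_smul, ht,
      smul_eq_mul, mul_one]
    exact hlin P hP hr
  have hμ0 : μ 0 = 0 := by
    have h0 : IsProjection (0 : Matrix (Fin N) (Fin N) ℂ) :=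
      ⟨by simp, Matrix.isHermitian_zero⟩
    have := hadd 0 0 h0 h0 (Commute.refl 0) (by simp)
    simp at this
    linarith
  -- key induction
  have key : ∀ (V : Matrix (Fin N) (Fin N) ℂ), V * Vᴴ = 1 → Vᴴ * V = 1 →
      ∀ s : Finset (Fin N),
      IsProjection (∑ i ∈ s, V * Matrix.single i i 1 * Vᴴ) ∧
      (μ (∑ i ∈ s, V * Matrix.single i i 1 * Vᴴ) : ℂ) =
        (ρ * ∑ i ∈ s, V * Matrix.single i i 1 * Vᴴ).trace := by
    intro V h1 h2 s
    induction s using Finset.induction_on with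
    | empty =>
      refine ⟨⟨by simp, Matrix.isHermitian_zero⟩, ?_⟩
      simp [hμ0]
    | @insert i s his ih =>
      obtain ⟨⟨hFsq, hFH⟩, hFμ⟩ := ih
      set P : Matrix (Fin N) (Fin N) ℂ := V * Matrix.single i i 1 * Vᴴ with hPdef
      set F : Matrix (Fin N) (Fin N) ℂ := ∑ j ∈ s, V * Matrix.single j j 1 * Vᴴ with hFdef
      obtain ⟨hPproj, hPrank, hPtr⟩ := gleasonConjProj h1 h2 i
      have hPF : P * F = 0 := by
        rw [hFdef, Finset.mul_sum]
        apply Finset.sum_eq_zero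
        intro j hj
        rw [hPdef, gleasonConjMul h2 i j, if_neg (by rintro rfl; exact his hj)]
      have hFP : F * P = 0 := by
        rw [hFdef, Finset.sum_mul]
        apply Finset.sum_eq_zero
        intro j hj
        rw [hPdef, gleasonConjMul h2 j i, if_neg (by rintro rfl; exact his hj)]
      have hcomm : Commute P F := by rw [Commute, SemiconjBy, hPF, hFP]
      have hsum : ∑ j ∈ insert i s, V * Matrix.single j j 1 * Vᴴ = P + F := by
        rw [Finset.sum_insert his]
      rw [hsum]
      constructor
      · constructor
        · rw [add_mul, mul_add, mul_add, hPproj.1, hFsq, hPF, hFP]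
          simp [hPdef]
        · exact hPproj.2.add hFH
      · rw [← hadd P F hPproj ⟨hFsq, hFH⟩ hcomm hPF]
        push_cast
        rw [hrank1 P hPproj hPrank hPtr, hFμ, mul_add, Matrix.trace_add]
  -- main: μ E = tr (ρ E) for every projection E
  have main : ∀ E : Matrix (Fin N) (Fin N) ℂ, IsProjection E → (μ E : ℂ) = (ρ * E).trace := by
    intro E hE
    obtain ⟨hsq, hH⟩ := hE
    set V : Matrix (Fin N) (Fin N) ℂ :=
      (Matrix.IsHermitian.eigenvectorUnitary hH : Matrix (Fin N) (Fin N) ℂ) with hVdef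
    have hmem := (Matrix.IsHermitian.eigenvectorUnitary hH).2
    have h1 : V * Vᴴ = 1 := by
      simpa [hVdef, Matrix.star_eq_conjTranspose] using (Matrix.mem_unitaryGroup_iff.mp hmem)
    have h2 : Vᴴ * V = 1 := by
      simpa [hVdef, Matrix.star_eq_conjTranspose] using (Matrix.mem_unitaryGroup_iff'.mp hmem)
    set D : Matrix (Fin N) (Fin N) ℂ := diagonal (RCLike.ofReal ∘ hH.eigenvalues) with hDdef
    have hD : Vᴴ * E * V = D := by
      simpa [Matrix.star_eq_conjTranspose, hVdef, hDdef] using hH.conjStarAlgAut_star_eigenvectorUnitary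
    have hspec : E = V * D * Vᴴ := by
      simpa [Matrix.star_eq_conjTranspose, hVdef, hDdef] using hH.spectral_theorem
    have hDD : D * D = D := by
      rw [← hD]
      calc (Vᴴ * E * V) * (Vᴴ * E * V) = Vᴴ * (E * (V * Vᴴ) * E) * V := by
            simp only [mul_assoc]
          _ = Vᴴ * E * V := by rw [h1, mul_one, hsq, mul_assoc]
    have heig : ∀ i, hH.eigenvalues i = 0 ∨ hH.eigenvalues i = 1 := by
      intro i
      have := congrFun (congrFun hDD i) i
      simp only [hDdef, diagonal_mul_diagonal, diagonal_apply_eq, Pi.mul_apply,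
        Function.comp_apply] at this
      have h' : hH.eigenvalues i * hH.eigenvalues i = hH.eigenvalues i := by
        exact_mod_cast this
      have h'' : hH.eigenvalues i * (hH.eigenvalues i - 1) = 0 := by ring_nf; linarith [h']
      rcases mul_eq_zero.mp h'' with h | h
      · left; exact h
      · right; linarith
    set s : Finset (Fin N) := Finset.univ.filter (fun i => hH.eigenvalues i = 1) with hsdef
    have hDs : D = ∑ i ∈ s, Matrix.single i i (1:ℂ) := by
      ext a b
      rw [Matrix.sum_apply]
      by_cases hab : a = b
      · subst hab
        by_cases ha : hH.eigenvalues a = 1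
        · rw [Finset.sum_eq_single a]
          · simp [hDdef, ha]
          · intro j _ hj
            simp [Matrix.single, hj]
          · intro h
            exact absurd (by simp [hsdef, ha]) h
        · have ha0 : hH.eigenvalues a = 0 := (heig a).resolve_right ha
          rw [Finset.sum_eq_zero]
          · simp [hDdef, ha0]
          · intro j hj
            rcases eq_or_ne j a with rfl | hne
            · exact absurd (by simpa [hsdef] using hj) ha
            · simp [Matrix.single, hne]
      · rw [Finset.sum_eq_zero]
        · simp [hDdef, diagonal_apply_ne _ hab]
        · intro j hj
          simp [Matrix.single, hab]
          intro h h'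
          exact absurd (h ▸ h') hab
    have hEsum : E = ∑ i ∈ s, V * Matrix.single i i 1 * Vᴴ := by
      rw [hspec, hDs, Finset.mul_sum, Finset.sum_mul]
    rw [hEsum]
    exact (key V h1 h2 s).2
  have hproj1 : IsProjection (1 : Matrix (Fin N) (Fin N) ℂ) := ⟨one_mul 1, isHermitian_one⟩
  have htr : ρ.trace = 1 := by
    have := main 1 hproj1
    rw [hone, mul_one] at this
    exact_mod_cast this.symm
  have hρH : ρ.IsHermitian := by
    apply hη.add
    unfold Matrix.IsHermitian
    rw [conjTranspose_smul, conjTranspose_one]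
    norm_num
  refine ⟨?_, htr, main⟩
  apply hρH.posSemidef_iff_eigenvalues_nonneg.mpr
  intro i
  set W : Matrix (Fin N) (Fin N) ℂ :=
    (Matrix.IsHermitian.eigenvectorUnitary hρH : Matrix (Fin N) (Fin N) ℂ) with hWdef
  have hmem := (Matrix.IsHermitian.eigenvectorUnitary hρH).2
  have h1 : W * Wᴴ = 1 := by
    simpa [hWdef, Matrix.star_eq_conjTranspose] using (Matrix.mem_unitaryGroup_iff.mp hmem)
  have h2 : Wᴴ * W = 1 := by
    simpa [hWdef, Matrix.star_eq_conjTranspose] using (Matrix.mem_unitaryGroup_iff'.mp hmem)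
  set D' : Matrix (Fin N) (Fin N) ℂ := diagonal (RCLike.ofReal ∘ hρH.eigenvalues) with hD'def
  have hspec : ρ = W * D' * Wᴴ := by
    simpa [Matrix.star_eq_conjTranspose, hWdef, hD'def] using hρH.spectral_theorem
  set Q : Matrix (Fin N) (Fin N) ℂ := W * Matrix.single i i 1 * Wᴴ with hQdef
  obtain ⟨hQproj, hQrank, hQtr⟩ := gleasonConjProj h1 h2 i
  have htrQ : (ρ * Q).trace = (hρH.eigenvalues i : ℂ) := by
    have hmul : ρ * Q = W * (D' * Matrix.single i i 1) * Wᴴ := by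
      rw [hspec, hQdef]
      calc (W * D' * Wᴴ) * (W * Matrix.single i i 1 * Wᴴ)
          = W * (D' * (Wᴴ * W) * Matrix.single i i 1) * Wᴴ := by simp only [mul_assoc]
        _ = W * (D' * Matrix.single i i 1) * Wᴴ := by rw [h2, mul_one]
    rw [hmul, trace_mul_cycle, h2, one_mul]
    rw [Matrix.trace, Finset.sum_eq_single i]
    · simp [Matrix.diag, hD'def]
    · intro b _ hb
      simpa [Matrix.diag] using
        Matrix.mul_single_apply_of_ne 1 i i b b hb D'
    · simp
  have hμQ : (μ Q : ℂ) = (ρ * Q).trace := hrank1 Q hQproj hQrank hQtr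
  have : (hρH.eigenvalues i : ℂ) = (μ Q : ℂ) := by rw [hμQ, htrQ]
  have hre : hρH.eigenvalues i = μ Q := by exact_mod_cast this
  rw [hre]
  exact hpos Q hQproj
end
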